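/- arXiv:1602.06751 — 2 statements merged into one kernel-verified Lean document; each statement's English description precedes it below -/
import Mathlib

section
/- Suppose there exist simple 5-(18,7,66), 5-(18,8,112), 5-(18,9,100) and 5-(18,10,792) designs. Then there exists a simple 5-(36, 10, 82152) design (note 82152 = 1304 × 63). -/
/-- `SimpleDesignExists t v k lam` asserts the existence of a simple
`t-(v, k, lam)` design: a `v`-set `X` together with a set `B` of distinct
`k`-element subsets of `X` (blocks) such that every `t`-element subset of `X`
is contained in exactly `lam` blocks. -/
def SimpleDesignExists (t v k lam : ℕ) : Prop :=
  ∃ (X : Finset ℕ) (B : Finset (Finset ℕ)),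
    X.card = v ∧
    (∀ b ∈ B, b ⊆ X ∧ b.card = k) ∧
    (∀ T ⊆ X, T.card = t → (B.filter (fun b => T ⊆ b)).card = lam)


open Finset


/-- number of n-subsets of Y containing a fixed subset S -/
lemma powCount (Y S : Finset ℕ) (n : ℕ) (hS : S ⊆ Y) (hn : S.card ≤ n) :
    ((Y.powersetCard n).filter (fun T => S ⊆ T)).card
      = (Y.card - S.card).choose (n - S.card) := by
  rw [← Finset.card_sdiff_of_subset hS, ← Finset.card_powersetCard (n - S.card) (Y \ S)]
  apply Finset.card_nbij' (fun T => T \ S) (fun U => U ∪ S)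
  · intro T hT
    simp only [Finset.mem_coe, mem_filter, Finset.mem_powersetCard] at hT ⊢
    obtain ⟨⟨hTY, hTc⟩, hST⟩ := hT
    exact ⟨sdiff_subset_sdiff hTY (Finset.Subset.refl S), by rw [Finset.card_sdiff_of_subset hST, hTc]⟩
  · intro U hU
    simp only [Finset.mem_coe, mem_filter, Finset.mem_powersetCard] at hU ⊢
    obtain ⟨hUY, hUc⟩ := hU
    have hdisj : Disjoint U S := Finset.disjoint_of_subset_left hUY (Finset.sdiff_disjoint)
    constructor
    · constructor
      · exact Finset.union_subset (hUY.trans Finset.sdiff_subset) hS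
      · rw [Finset.card_union_of_disjoint hdisj, hUc]
        omega
    · exact Finset.subset_union_right
  · intro T hT
    simp only [Finset.mem_coe, mem_filter, Finset.mem_powersetCard] at hT
    exact Finset.sdiff_union_of_subset hT.2
  · intro U hU
    simp only [Finset.mem_coe, Finset.mem_powersetCard] at hU
    exact Finset.union_sdiff_cancel_right
      (Finset.disjoint_of_subset_left hU.1 Finset.sdiff_disjoint)

/-- case S.card > n : no n-subset contains S -/
lemma powCount0 (Y S : Finset ℕ) (n : ℕ) (hn : n < S.card) :
    ((Y.powersetCard n).filter (fun T => S ⊆ T)).card = 0 := by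
  rw [Finset.card_eq_zero, Finset.filter_eq_empty_iff]
  intro T hT hST
  rw [Finset.mem_powersetCard] at hT
  have := Finset.card_le_card hST
  omega


/-- double counting: a 5-design is also an s-design for s ≤ 5 -/
lemma designCount_mul (X : Finset ℕ) (B : Finset (Finset ℕ)) (k lam : ℕ)
    (hbl : ∀ b ∈ B, b ⊆ X ∧ b.card = k)
    (hdes : ∀ T ⊆ X, T.card = 5 → (B.filter (fun b => T ⊆ b)).card = lam)
    (S : Finset ℕ) (hS : S ⊆ X) (hs5 : S.card ≤ 5) :
    (B.filter (fun b => S ⊆ b)).card * (k - S.card).choose (5 - S.card)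
      = lam * (X.card - S.card).choose (5 - S.card) := by
  classical
  set 𝒯 : Finset (Finset ℕ) := (X.powersetCard 5).filter (fun T => S ⊆ T) with h𝒯
  have key : ∑ b ∈ B, (𝒯.filter (fun T => T ⊆ b)).card
      = ∑ T ∈ 𝒯, (B.filter (fun b => T ⊆ b)).card := by
    simp only [Finset.card_filter]
    exact Finset.sum_comm
  -- RHS evaluation
  have hrhs : ∑ T ∈ 𝒯, (B.filter (fun b => T ⊆ b)).card
      = (X.card - S.card).choose (5 - S.card) * lam := by
    rw [Finset.sum_congr rfl (fun T hT => ?_), Finset.sum_const, smul_eq_mul,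
        h𝒯, powCount X S 5 hS hs5]
    · rw [h𝒯] at hT
      simp only [mem_filter, Finset.mem_powersetCard] at hT
      exact hdes T hT.1.1 hT.1.2
  -- LHS evaluation
  have hlhs : ∑ b ∈ B, (𝒯.filter (fun T => T ⊆ b)).card
      = (B.filter (fun b => S ⊆ b)).card * (k - S.card).choose (5 - S.card) := by
    have hterm : ∀ b ∈ B, (𝒯.filter (fun T => T ⊆ b)).card
        = if S ⊆ b then (k - S.card).choose (5 - S.card) else 0 := by
      intro b hb
      obtain ⟨hbX, hbk⟩ := hbl b hb
      by_cases hSb : S ⊆ b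
      · rw [if_pos hSb]
        have : 𝒯.filter (fun T => T ⊆ b) = (b.powersetCard 5).filter (fun T => S ⊆ T) := by
          rw [h𝒯]
          ext T
          simp only [mem_filter, Finset.mem_powersetCard]
          constructor
          · rintro ⟨⟨⟨hTX, hT5⟩, hST⟩, hTb⟩
            exact ⟨⟨hTb, hT5⟩, hST⟩
          · rintro ⟨⟨hTb, hT5⟩, hST⟩
            exact ⟨⟨⟨hTb.trans hbX, hT5⟩, hST⟩, hTb⟩
        rw [this, powCount b S 5 hSb hs5, hbk]
      · rw [if_neg hSb]
        rw [Finset.card_eq_zero, Finset.filter_eq_empty_iff]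
        rintro T hT hTb
        rw [h𝒯] at hT
        simp only [mem_filter] at hT
        exact hSb (hT.2.trans hTb)
    rw [Finset.sum_congr rfl hterm, Finset.sum_ite, Finset.sum_const, Finset.sum_const]
    simp [mul_comm]
  rw [← hlhs, key, hrhs, mul_comm]

lemma transport {t v k lam : ℕ} (h : SimpleDesignExists t v k lam)
    (Y : Finset ℕ) (hY : Y.card = v) :
    ∃ B : Finset (Finset ℕ),
      (∀ b ∈ B, b ⊆ Y ∧ b.card = k) ∧
      (∀ T ⊆ Y, T.card = t → (B.filter (fun b => T ⊆ b)).card = lam) := by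
  classical
  obtain ⟨X, B0, hXc, hbl, hdes⟩ := h
  have hcard : X.card = Y.card := by rw [hXc, hY]
  set e := Finset.equivOfCardEq hcard with he
  set f : ℕ → ℕ := fun x => if hx : x ∈ X then (e ⟨x, hx⟩ : ℕ) else x with hf
  have hfY : ∀ x ∈ X, f x ∈ Y := by
    intro x hx
    simp only [hf, dif_pos hx]
    exact (e ⟨x, hx⟩).2
  have hinj : Set.InjOn f X := by
    intro x hx y hy hxy
    rw [Finset.mem_coe] at hx hy
    simp only [hf, dif_pos hx, dif_pos hy] at hxy
    have := e.injective (Subtype.ext hxy)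
    exact congrArg Subtype.val this
  have himg : X.image f = Y := by
    apply Finset.eq_of_subset_of_card_le
    · intro y hy
      obtain ⟨x, hx, rfl⟩ := Finset.mem_image.mp hy
      exact hfY x hx
    · rw [Finset.card_image_of_injOn hinj, hcard]
  refine ⟨B0.image (Finset.image f), ?_, ?_⟩
  · intro b hb
    obtain ⟨b0, hb0, rfl⟩ := Finset.mem_image.mp hb
    obtain ⟨hb0X, hb0k⟩ := hbl b0 hb0
    constructor
    · rw [← himg]
      exact Finset.image_subset_image hb0X
    · rw [Finset.card_image_of_injOn (hinj.mono hb0X), hb0k]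
  · intro T hTY hTt
    set S : Finset ℕ := X.filter (fun x => f x ∈ T) with hSdef
    have hSX : S ⊆ X := Finset.filter_subset _ _
    have hSimg : S.image f = T := by
      apply Finset.Subset.antisymm
      · intro y hy
        obtain ⟨x, hx, rfl⟩ := Finset.mem_image.mp hy
        exact (Finset.mem_filter.mp hx).2
      · intro y hy
        have : y ∈ X.image f := by rw [himg]; exact hTY hy
        obtain ⟨x, hx, rfl⟩ := Finset.mem_image.mp this
        exact Finset.mem_image.mpr ⟨x, Finset.mem_filter.mpr ⟨hx, hy⟩, rfl⟩
    have hScard : S.card = t := by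
      rw [← hTt, ← hSimg, Finset.card_image_of_injOn (hinj.mono hSX)]
    have hiff : ∀ b0 ∈ B0, (T ⊆ b0.image f ↔ S ⊆ b0) := by
      intro b0 hb0
      obtain ⟨hb0X, _⟩ := hbl b0 hb0
      constructor
      · intro hTb x hx
        obtain ⟨hxX, hfxT⟩ := Finset.mem_filter.mp hx
        obtain ⟨x', hx', hfx'⟩ := Finset.mem_image.mp (hTb hfxT)
        rwa [← hinj (hb0X hx') hxX hfx']
      · intro hSb y hy
        rw [← hSimg] at hy
        obtain ⟨x, hx, rfl⟩ := Finset.mem_image.mp hy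
        exact Finset.mem_image.mpr ⟨x, hSb hx, rfl⟩
    rw [Finset.filter_image]
    rw [Finset.filter_congr hiff]
    rw [Finset.card_image_of_injOn, hdes S hSX hScard]
    intro b1 hb1 b2 hb2 heq
    simp only [Finset.coe_filter, Set.mem_setOf_eq] at hb1 hb2
    have hb1X := (hbl b1 hb1.1).1
    have hb2X := (hbl b2 hb2.1).1
    apply Finset.Subset.antisymm
    · intro x hx
      have : f x ∈ b2.image f := by rw [← heq]; exact Finset.mem_image_of_mem f hx
      obtain ⟨x', hx', hfx'⟩ := Finset.mem_image.mp this
      exact (hinj (hb2X hx') (hb1X hx) hfx') ▸ hx'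
    · intro x hx
      have : f x ∈ b1.image f := by rw [heq]; exact Finset.mem_image_of_mem f hx
      obtain ⟨x', hx', hfx'⟩ := Finset.mem_image.mp this
      exact (hinj (hb1X hx') (hb2X hx) hfx') ▸ hx'

/-- helper: (c ∪ d) ∩ A = c when c ⊆ A and d is disjoint from A -/
lemma union_inter_eq_left {c d A : Finset ℕ} (hc : c ⊆ A) (hd : Disjoint d A) :
    (c ∪ d) ∩ A = c := by
  ext x
  simp only [Finset.mem_inter, Finset.mem_union]
  constructor
  · rintro ⟨h | h, hA⟩
    · exact h
    · exact absurd hA (Finset.disjoint_left.mp hd h)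
  · intro h
    exact ⟨Or.inl h, hc h⟩

/-- counting blocks containing T in a "product" component -/
lemma compCount (A Bs : Finset ℕ) (hdis : Disjoint A Bs)
    (F G : Finset (Finset ℕ)) (hF : ∀ c ∈ F, c ⊆ A) (hG : ∀ d ∈ G, d ⊆ Bs)
    (T : Finset ℕ) :
    (((F ×ˢ G).image (fun p => p.1 ∪ p.2)).filter (fun b => T ⊆ b)).card
      = (F.filter (fun c => T ∩ A ⊆ c)).card * (G.filter (fun d => T \ A ⊆ d)).card := by
  classical
  rw [Finset.filter_image]
  have hsplit : ∀ p ∈ F ×ˢ G, (T ⊆ p.1 ∪ p.2 ↔ (T ∩ A ⊆ p.1 ∧ T \ A ⊆ p.2)) := by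
    rintro ⟨c, d⟩ hp
    rw [Finset.mem_product] at hp
    have hcA := hF c hp.1
    have hdB := hG d hp.2
    constructor
    · intro h
      constructor
      · intro x hx
        rw [Finset.mem_inter] at hx
        rcases Finset.mem_union.mp (h hx.1) with h' | h'
        · exact h'
        · exact absurd (Finset.mem_inter.mpr ⟨hx.2, hdB h'⟩)
            (by rw [Finset.disjoint_iff_inter_eq_empty.mp hdis]; exact Finset.notMem_empty x)
      · intro x hx
        rw [Finset.mem_sdiff] at hx
        rcases Finset.mem_union.mp (h hx.1) with h' | h'
        · exact absurd (hcA h') hx.2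
        · exact h'
    · rintro ⟨h1, h2⟩ x hx
      by_cases hxA : x ∈ A
      · exact Finset.mem_union_left _ (h1 (Finset.mem_inter.mpr ⟨hx, hxA⟩))
      · exact Finset.mem_union_right _ (h2 (Finset.mem_sdiff.mpr ⟨hx, hxA⟩))
  rw [Finset.filter_congr hsplit, Finset.filter_product, ← Finset.card_product]
  apply Finset.card_image_of_injOn
  rintro ⟨c, d⟩ hp ⟨c', d'⟩ hp' heq
  simp only [Finset.mem_coe, Finset.mem_product, Finset.mem_filter] at hp hp'
  have hcA := hF c hp.1.1
  have hdB := hG d hp.2.1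
  have hcA' := hF c' hp'.1.1
  have hdB' := hG d' hp'.2.1
  simp only at heq
  have hc : c = c' := by
    have h1 : (c ∪ d) ∩ A = c :=
      union_inter_eq_left hcA (Finset.disjoint_of_subset_left hdB hdis.symm)
    have h2 : (c' ∪ d') ∩ A = c' :=
      union_inter_eq_left hcA' (Finset.disjoint_of_subset_left hdB' hdis.symm)
    rw [← h1, ← h2, heq]
  have hd : d = d' := by
    have h1 : (c ∪ d) ∩ Bs = d := by
      rw [Finset.union_comm]
      exact union_inter_eq_left hdB (Finset.disjoint_of_subset_left hcA hdis)
    have h2 : (c' ∪ d') ∩ Bs = d' := by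
      rw [Finset.union_comm]
      exact union_inter_eq_left hdB' (Finset.disjoint_of_subset_left hcA' hdis)
    rw [← h1, ← h2, heq]
  exact Prod.ext hc hd

lemma designVal (Y : Finset ℕ) (hYc : Y.card = 18) (B : Finset (Finset ℕ)) (k lam : ℕ)
    (hbl : ∀ b ∈ B, b ⊆ Y ∧ b.card = k)
    (hdes : ∀ T ⊆ Y, T.card = 5 → (B.filter (fun b => T ⊆ b)).card = lam)
    (S : Finset ℕ) (hS : S ⊆ Y) (N : ℕ) (hs5 : S.card ≤ 5)
    (h1 : N * (k - S.card).choose (5 - S.card) = lam * (18 - S.card).choose (5 - S.card))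
    (h2 : (k - S.card).choose (5 - S.card) ≠ 0) :
    (B.filter (fun b => S ⊆ b)).card = N := by
  have h := designCount_mul Y B k lam hbl hdes S hS hs5
  rw [hYc] at h
  exact Nat.eq_of_mul_eq_mul_right (Nat.pos_of_ne_zero h2) (h.trans h1.symm)

theorem designExists_5_36_10_1304
    (h1 : SimpleDesignExists 5 18 7 66)
    (h2 : SimpleDesignExists 5 18 8 112)
    (h3 : SimpleDesignExists 5 18 9 100)
    (h4 : SimpleDesignExists 5 18 10 792)
    : SimpleDesignExists 5 36 10 82152 := by
  classical
  set A : Finset ℕ := Finset.range 18 with hA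
  set Bs : Finset ℕ := Finset.Ico 18 36 with hBs
  have hAc : A.card = 18 := by simp [hA]
  have hBc : Bs.card = 18 := by simp [hBs]
  have hdis : Disjoint A Bs := by
    rw [hA, hBs, Finset.range_eq_Ico]
    exact Finset.Ico_disjoint_Ico_consecutive 0 18 36
  have hunion : A ∪ Bs = Finset.range 36 := by
    rw [hA, hBs, Finset.range_eq_Ico]
    exact Finset.Ico_union_Ico_eq_Ico (by norm_num) (by norm_num)
  obtain ⟨A7, hA7b, hA7d⟩ := transport h1 A hAc
  obtain ⟨A8, hA8b, hA8d⟩ := transport h2 A hAc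
  obtain ⟨A9, hA9b, hA9d⟩ := transport h3 A hAc
  obtain ⟨A10, hA10b, hA10d⟩ := transport h4 A hAc
  obtain ⟨B7, hB7b, hB7d⟩ := transport h1 Bs hBc
  obtain ⟨B8, hB8b, hB8d⟩ := transport h2 Bs hBc
  obtain ⟨B9, hB9b, hB9d⟩ := transport h3 Bs hBc
  obtain ⟨B10, hB10b, hB10d⟩ := transport h4 Bs hBc
  set FA : ℕ → Finset (Finset ℕ) := fun i =>
    if i = 7 then A7 else if i = 8 then A8 else if i = 9 then A9 else if i = 10 then A10
    else if i = 6 then ∅ else A.powersetCard i with hFA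
  set FB : ℕ → Finset (Finset ℕ) := fun i =>
    if i = 3 then B7 else if i = 2 then B8 else if i = 1 then B9 else if i = 0 then B10
    else if i = 4 then ∅ else Bs.powersetCard (10 - i) with hFB
  have hFA0 : FA 0 = A.powersetCard 0 := by norm_num [hFA]
  have hFA1 : FA 1 = A.powersetCard 1 := by norm_num [hFA]
  have hFA2 : FA 2 = A.powersetCard 2 := by norm_num [hFA]
  have hFA3 : FA 3 = A.powersetCard 3 := by norm_num [hFA]
  have hFA4 : FA 4 = A.powersetCard 4 := by norm_num [hFA]
  have hFA5 : FA 5 = A.powersetCard 5 := by norm_num [hFA]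
  have hFA6 : FA 6 = ∅ := by norm_num [hFA]
  have hFA7 : FA 7 = A7 := by norm_num [hFA]
  have hFA8 : FA 8 = A8 := by norm_num [hFA]
  have hFA9 : FA 9 = A9 := by norm_num [hFA]
  have hFA10 : FA 10 = A10 := by norm_num [hFA]
  have hFB0 : FB 0 = B10 := by norm_num [hFB]
  have hFB1 : FB 1 = B9 := by norm_num [hFB]
  have hFB2 : FB 2 = B8 := by norm_num [hFB]
  have hFB3 : FB 3 = B7 := by norm_num [hFB]
  have hFB4 : FB 4 = ∅ := by norm_num [hFB]
  have hFB5 : FB 5 = Bs.powersetCard 5 := by norm_num [hFB]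
  have hFB6 : FB 6 = Bs.powersetCard 4 := by norm_num [hFB]
  have hFB7 : FB 7 = Bs.powersetCard 3 := by norm_num [hFB]
  have hFB8 : FB 8 = Bs.powersetCard 2 := by norm_num [hFB]
  have hFB9 : FB 9 = Bs.powersetCard 1 := by norm_num [hFB]
  have hFB10 : FB 10 = Bs.powersetCard 0 := by norm_num [hFB]
  -- properties of the families
  have propA : ∀ i, ∀ c ∈ FA i, c ⊆ A ∧ c.card = i := by
    intro i c hc
    rw [hFA] at hc
    simp only at hc
    split_ifs at hc with h7 h8 h9 h10 h6
    · subst h7; exact hA7b c hc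
    · subst h8; exact hA8b c hc
    · subst h9; exact hA9b c hc
    · subst h10; exact hA10b c hc
    · exact absurd hc (Finset.notMem_empty c)
    · exact Finset.mem_powersetCard.mp hc
  have propB : ∀ i, ∀ d ∈ FB i, d ⊆ Bs ∧ d.card = 10 - i := by
    intro i d hd
    rw [hFB] at hd
    simp only at hd
    split_ifs at hd with h3 h2' h1' h0 h4
    · subst h3; exact ⟨(hB7b d hd).1, (hB7b d hd).2⟩
    · subst h2'; exact ⟨(hB8b d hd).1, (hB8b d hd).2⟩
    · subst h1'; exact ⟨(hB9b d hd).1, (hB9b d hd).2⟩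
    · subst h0; exact ⟨(hB10b d hd).1, (hB10b d hd).2⟩
    · exact absurd hd (Finset.notMem_empty d)
    · exact Finset.mem_powersetCard.mp hd
  set comp : ℕ → Finset (Finset ℕ) :=
    fun i => ((FA i) ×ˢ (FB i)).image (fun p => p.1 ∪ p.2) with hcomp
  -- each block of comp i meets A in exactly i points
  have hcompA : ∀ i, ∀ b ∈ comp i, (b ∩ A).card = i := by
    intro i b hb
    rw [hcomp] at hb
    obtain ⟨⟨c, d⟩, hp, rfl⟩ := Finset.mem_image.mp hb
    rw [Finset.mem_product] at hp
    obtain ⟨hcA, hcc⟩ := propA i c hp.1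
    obtain ⟨hdB, _⟩ := propB i d hp.2
    rw [union_inter_eq_left hcA (Finset.disjoint_of_subset_left hdB hdis.symm)]
    exact hcc
  have hcompdis : ∀ i ∈ Finset.range 11, ∀ j ∈ Finset.range 11, i ≠ j →
      Disjoint (comp i) (comp j) := by
    intro i _ j _ hij
    rw [Finset.disjoint_left]
    intro b hbi hbj
    exact hij ((hcompA i b hbi).symm.trans (hcompA j b hbj))
  refine ⟨Finset.range 36, (Finset.range 11).biUnion comp, by simp, ?_, ?_⟩
  · -- blocks are 10-subsets of range 36
    intro b hb
    obtain ⟨i, hi, hbc⟩ := Finset.mem_biUnion.mp hb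
    rw [Finset.mem_range] at hi
    rw [hcomp] at hbc
    obtain ⟨⟨c, d⟩, hp, rfl⟩ := Finset.mem_image.mp hbc
    rw [Finset.mem_product] at hp
    obtain ⟨hcA, hcc⟩ := propA i c hp.1
    obtain ⟨hdB, hdc⟩ := propB i d hp.2
    constructor
    · rw [← hunion]
      exact Finset.union_subset_union hcA hdB
    · rw [Finset.card_union_of_disjoint
        (Finset.disjoint_of_subset_left hcA (Finset.disjoint_of_subset_right hdB hdis)),
        hcc, hdc]
      omega
  · -- the design property
    intro T hTX hT5
    set S1 : Finset ℕ := T ∩ A with hS1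
    set S2 : Finset ℕ := T \ A with hS2
    have hS1A : S1 ⊆ A := Finset.inter_subset_right
    have hS2B : S2 ⊆ Bs := by
      intro x hx
      rw [hS2, Finset.mem_sdiff] at hx
      have := hTX hx.1
      rw [← hunion, Finset.mem_union] at this
      tauto
    have hcards : S1.card + S2.card = 5 := by
      rw [hS1, hS2, Finset.card_inter_add_card_sdiff, hT5]
    have hterm : ∀ i ∈ Finset.range 11,
        ((comp i).filter (fun b => T ⊆ b)).card
          = ((FA i).filter (fun c => S1 ⊆ c)).card * ((FB i).filter (fun d => S2 ⊆ d)).card := by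
      intro i _
      rw [hcomp]
      exact compCount A Bs hdis (FA i) (FB i)
        (fun c hc => (propA i c hc).1) (fun d hd => (propB i d hd).1) T
    rw [Finset.filter_biUnion, Finset.card_biUnion
      (fun i hi j hj hij => Finset.disjoint_filter_filter (hcompdis i hi j hj hij)),
      Finset.sum_congr rfl hterm]
    simp only [Finset.sum_range_succ, Finset.sum_range_zero]
    have hs5 : S1.card ≤ 5 := by omega
    have hscases : S1.card = 0 ∨ S1.card = 1 ∨ S1.card = 2 ∨ S1.card = 3 ∨ S1.card = 4 ∨
        S1.card = 5 := by omega
    rcases hscases with hs1 | hs1 | hs1 | hs1 | hs1 | hs1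
    ·
      have hs2 : S2.card = 5 := by omega
      have na0 : ((FA 0).filter (fun c => S1 ⊆ c)).card = 1 := by
        have h := powCount A S1 0 hS1A (by omega)
        rw [hAc, hs1, show ((18:ℕ) - 0).choose (0 - 0) = 1 from by decide] at h
        rw [hFA0]; exact h
      have na1 : ((FA 1).filter (fun c => S1 ⊆ c)).card = 18 := by
        have h := powCount A S1 1 hS1A (by omega)
        rw [hAc, hs1, show ((18:ℕ) - 0).choose (1 - 0) = 18 from by decide] at h
        rw [hFA1]; exact h
      have na2 : ((FA 2).filter (fun c => S1 ⊆ c)).card = 153 := by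
        have h := powCount A S1 2 hS1A (by omega)
        rw [hAc, hs1, show ((18:ℕ) - 0).choose (2 - 0) = 153 from by decide] at h
        rw [hFA2]; exact h
      have na3 : ((FA 3).filter (fun c => S1 ⊆ c)).card = 816 := by
        have h := powCount A S1 3 hS1A (by omega)
        rw [hAc, hs1, show ((18:ℕ) - 0).choose (3 - 0) = 816 from by decide] at h
        rw [hFA3]; exact h
      have na4 : ((FA 4).filter (fun c => S1 ⊆ c)).card = 3060 := by
        have h := powCount A S1 4 hS1A (by omega)
        rw [hAc, hs1, show ((18:ℕ) - 0).choose (4 - 0) = 3060 from by decide] at h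
        rw [hFA4]; exact h
      have na5 : ((FA 5).filter (fun c => S1 ⊆ c)).card = 8568 := by
        have h := powCount A S1 5 hS1A (by omega)
        rw [hAc, hs1, show ((18:ℕ) - 0).choose (5 - 0) = 8568 from by decide] at h
        rw [hFA5]; exact h
      have na6 : ((FA 6).filter (fun c => S1 ⊆ c)).card = 0 := by
        rw [hFA6]; rfl
      have na7 : ((FA 7).filter (fun c => S1 ⊆ c)).card = 26928 := by
        rw [hFA7]
        exact designVal A hAc A7 7 66 hA7b hA7d S1 hS1A 26928 (by omega)
          (by rw [hs1]; decide) (by rw [hs1]; decide)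
      have na8 : ((FA 8).filter (fun c => S1 ⊆ c)).card = 17136 := by
        rw [hFA8]
        exact designVal A hAc A8 8 112 hA8b hA8d S1 hS1A 17136 (by omega)
          (by rw [hs1]; decide) (by rw [hs1]; decide)
      have na9 : ((FA 9).filter (fun c => S1 ⊆ c)).card = 6800 := by
        rw [hFA9]
        exact designVal A hAc A9 9 100 hA9b hA9d S1 hS1A 6800 (by omega)
          (by rw [hs1]; decide) (by rw [hs1]; decide)
      have na10 : ((FA 10).filter (fun c => S1 ⊆ c)).card = 26928 := by
        rw [hFA10]
        exact designVal A hAc A10 10 792 hA10b hA10d S1 hS1A 26928 (by omega)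
          (by rw [hs1]; decide) (by rw [hs1]; decide)
      have nb0 : ((FB 0).filter (fun d => S2 ⊆ d)).card = 792 := by
        rw [hFB0]
        exact designVal Bs hBc B10 10 792 hB10b hB10d S2 hS2B 792 (by omega)
          (by rw [hs2]; decide) (by rw [hs2]; decide)
      have nb1 : ((FB 1).filter (fun d => S2 ⊆ d)).card = 100 := by
        rw [hFB1]
        exact designVal Bs hBc B9 9 100 hB9b hB9d S2 hS2B 100 (by omega)
          (by rw [hs2]; decide) (by rw [hs2]; decide)
      have nb2 : ((FB 2).filter (fun d => S2 ⊆ d)).card = 112 := by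
        rw [hFB2]
        exact designVal Bs hBc B8 8 112 hB8b hB8d S2 hS2B 112 (by omega)
          (by rw [hs2]; decide) (by rw [hs2]; decide)
      have nb3 : ((FB 3).filter (fun d => S2 ⊆ d)).card = 66 := by
        rw [hFB3]
        exact designVal Bs hBc B7 7 66 hB7b hB7d S2 hS2B 66 (by omega)
          (by rw [hs2]; decide) (by rw [hs2]; decide)
      have nb4 : ((FB 4).filter (fun d => S2 ⊆ d)).card = 0 := by
        rw [hFB4]; rfl
      have nb5 : ((FB 5).filter (fun d => S2 ⊆ d)).card = 1 := by
        have h := powCount Bs S2 5 hS2B (by omega)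
        rw [hBc, hs2, show ((18:ℕ) - 5).choose (5 - 5) = 1 from by decide] at h
        rw [hFB5]; exact h
      have nb6 : ((FB 6).filter (fun d => S2 ⊆ d)).card = 0 := by
        have h := powCount0 Bs S2 4 (by omega)
        rw [hFB6]; exact h
      have nb7 : ((FB 7).filter (fun d => S2 ⊆ d)).card = 0 := by
        have h := powCount0 Bs S2 3 (by omega)
        rw [hFB7]; exact h
      have nb8 : ((FB 8).filter (fun d => S2 ⊆ d)).card = 0 := by
        have h := powCount0 Bs S2 2 (by omega)
        rw [hFB8]; exact h
      have nb9 : ((FB 9).filter (fun d => S2 ⊆ d)).card = 0 := by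
        have h := powCount0 Bs S2 1 (by omega)
        rw [hFB9]; exact h
      have nb10 : ((FB 10).filter (fun d => S2 ⊆ d)).card = 0 := by
        have h := powCount0 Bs S2 0 (by omega)
        rw [hFB10]; exact h
      rw [na0, na1, na2, na3, na4, na5, na6, na7, na8, na9, na10, nb0, nb1, nb2, nb3, nb5, nb6, nb7, nb8, nb9, nb10, nb4]
    ·
      have hs2 : S2.card = 4 := by omega
      have na0 : ((FA 0).filter (fun c => S1 ⊆ c)).card = 0 := by
        have h := powCount0 A S1 0 (by omega)
        rw [hFA0]; exact h
      have na1 : ((FA 1).filter (fun c => S1 ⊆ c)).card = 1 := by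
        have h := powCount A S1 1 hS1A (by omega)
        rw [hAc, hs1, show ((18:ℕ) - 1).choose (1 - 1) = 1 from by decide] at h
        rw [hFA1]; exact h
      have na2 : ((FA 2).filter (fun c => S1 ⊆ c)).card = 17 := by
        have h := powCount A S1 2 hS1A (by omega)
        rw [hAc, hs1, show ((18:ℕ) - 1).choose (2 - 1) = 17 from by decide] at h
        rw [hFA2]; exact h
      have na3 : ((FA 3).filter (fun c => S1 ⊆ c)).card = 136 := by
        have h := powCount A S1 3 hS1A (by omega)
        rw [hAc, hs1, show ((18:ℕ) - 1).choose (3 - 1) = 136 from by decide] at h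
        rw [hFA3]; exact h
      have na4 : ((FA 4).filter (fun c => S1 ⊆ c)).card = 680 := by
        have h := powCount A S1 4 hS1A (by omega)
        rw [hAc, hs1, show ((18:ℕ) - 1).choose (4 - 1) = 680 from by decide] at h
        rw [hFA4]; exact h
      have na5 : ((FA 5).filter (fun c => S1 ⊆ c)).card = 2380 := by
        have h := powCount A S1 5 hS1A (by omega)
        rw [hAc, hs1, show ((18:ℕ) - 1).choose (5 - 1) = 2380 from by decide] at h
        rw [hFA5]; exact h
      have na6 : ((FA 6).filter (fun c => S1 ⊆ c)).card = 0 := by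
        rw [hFA6]; rfl
      have na7 : ((FA 7).filter (fun c => S1 ⊆ c)).card = 10472 := by
        rw [hFA7]
        exact designVal A hAc A7 7 66 hA7b hA7d S1 hS1A 10472 (by omega)
          (by rw [hs1]; decide) (by rw [hs1]; decide)
      have na8 : ((FA 8).filter (fun c => S1 ⊆ c)).card = 7616 := by
        rw [hFA8]
        exact designVal A hAc A8 8 112 hA8b hA8d S1 hS1A 7616 (by omega)
          (by rw [hs1]; decide) (by rw [hs1]; decide)
      have na9 : ((FA 9).filter (fun c => S1 ⊆ c)).card = 3400 := by
        rw [hFA9]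
        exact designVal A hAc A9 9 100 hA9b hA9d S1 hS1A 3400 (by omega)
          (by rw [hs1]; decide) (by rw [hs1]; decide)
      have na10 : ((FA 10).filter (fun c => S1 ⊆ c)).card = 14960 := by
        rw [hFA10]
        exact designVal A hAc A10 10 792 hA10b hA10d S1 hS1A 14960 (by omega)
          (by rw [hs1]; decide) (by rw [hs1]; decide)
      have nb0 : ((FB 0).filter (fun d => S2 ⊆ d)).card = 1848 := by
        rw [hFB0]
        exact designVal Bs hBc B10 10 792 hB10b hB10d S2 hS2B 1848 (by omega)
          (by rw [hs2]; decide) (by rw [hs2]; decide)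
      have nb1 : ((FB 1).filter (fun d => S2 ⊆ d)).card = 280 := by
        rw [hFB1]
        exact designVal Bs hBc B9 9 100 hB9b hB9d S2 hS2B 280 (by omega)
          (by rw [hs2]; decide) (by rw [hs2]; decide)
      have nb2 : ((FB 2).filter (fun d => S2 ⊆ d)).card = 392 := by
        rw [hFB2]
        exact designVal Bs hBc B8 8 112 hB8b hB8d S2 hS2B 392 (by omega)
          (by rw [hs2]; decide) (by rw [hs2]; decide)
      have nb3 : ((FB 3).filter (fun d => S2 ⊆ d)).card = 308 := by
        rw [hFB3]
        exact designVal Bs hBc B7 7 66 hB7b hB7d S2 hS2B 308 (by omega)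
          (by rw [hs2]; decide) (by rw [hs2]; decide)
      have nb4 : ((FB 4).filter (fun d => S2 ⊆ d)).card = 0 := by
        rw [hFB4]; rfl
      have nb5 : ((FB 5).filter (fun d => S2 ⊆ d)).card = 14 := by
        have h := powCount Bs S2 5 hS2B (by omega)
        rw [hBc, hs2, show ((18:ℕ) - 4).choose (5 - 4) = 14 from by decide] at h
        rw [hFB5]; exact h
      have nb6 : ((FB 6).filter (fun d => S2 ⊆ d)).card = 1 := by
        have h := powCount Bs S2 4 hS2B (by omega)
        rw [hBc, hs2, show ((18:ℕ) - 4).choose (4 - 4) = 1 from by decide] at h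
        rw [hFB6]; exact h
      have nb7 : ((FB 7).filter (fun d => S2 ⊆ d)).card = 0 := by
        have h := powCount0 Bs S2 3 (by omega)
        rw [hFB7]; exact h
      have nb8 : ((FB 8).filter (fun d => S2 ⊆ d)).card = 0 := by
        have h := powCount0 Bs S2 2 (by omega)
        rw [hFB8]; exact h
      have nb9 : ((FB 9).filter (fun d => S2 ⊆ d)).card = 0 := by
        have h := powCount0 Bs S2 1 (by omega)
        rw [hFB9]; exact h
      have nb10 : ((FB 10).filter (fun d => S2 ⊆ d)).card = 0 := by
        have h := powCount0 Bs S2 0 (by omega)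
        rw [hFB10]; exact h
      rw [na0, na1, na2, na3, na4, na5, na6, na7, na8, na9, na10, nb0, nb1, nb2, nb3, nb5, nb6, nb7, nb8, nb9, nb10, nb4]
    ·
      have hs2 : S2.card = 3 := by omega
      have na0 : ((FA 0).filter (fun c => S1 ⊆ c)).card = 0 := by
        have h := powCount0 A S1 0 (by omega)
        rw [hFA0]; exact h
      have na1 : ((FA 1).filter (fun c => S1 ⊆ c)).card = 0 := by
        have h := powCount0 A S1 1 (by omega)
        rw [hFA1]; exact h
      have na2 : ((FA 2).filter (fun c => S1 ⊆ c)).card = 1 := by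
        have h := powCount A S1 2 hS1A (by omega)
        rw [hAc, hs1, show ((18:ℕ) - 2).choose (2 - 2) = 1 from by decide] at h
        rw [hFA2]; exact h
      have na3 : ((FA 3).filter (fun c => S1 ⊆ c)).card = 16 := by
        have h := powCount A S1 3 hS1A (by omega)
        rw [hAc, hs1, show ((18:ℕ) - 2).choose (3 - 2) = 16 from by decide] at h
        rw [hFA3]; exact h
      have na4 : ((FA 4).filter (fun c => S1 ⊆ c)).card = 120 := by
        have h := powCount A S1 4 hS1A (by omega)
        rw [hAc, hs1, show ((18:ℕ) - 2).choose (4 - 2) = 120 from by decide] at h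
        rw [hFA4]; exact h
      have na5 : ((FA 5).filter (fun c => S1 ⊆ c)).card = 560 := by
        have h := powCount A S1 5 hS1A (by omega)
        rw [hAc, hs1, show ((18:ℕ) - 2).choose (5 - 2) = 560 from by decide] at h
        rw [hFA5]; exact h
      have na6 : ((FA 6).filter (fun c => S1 ⊆ c)).card = 0 := by
        rw [hFA6]; rfl
      have na7 : ((FA 7).filter (fun c => S1 ⊆ c)).card = 3696 := by
        rw [hFA7]
        exact designVal A hAc A7 7 66 hA7b hA7d S1 hS1A 3696 (by omega)
          (by rw [hs1]; decide) (by rw [hs1]; decide)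
      have na8 : ((FA 8).filter (fun c => S1 ⊆ c)).card = 3136 := by
        rw [hFA8]
        exact designVal A hAc A8 8 112 hA8b hA8d S1 hS1A 3136 (by omega)
          (by rw [hs1]; decide) (by rw [hs1]; decide)
      have na9 : ((FA 9).filter (fun c => S1 ⊆ c)).card = 1600 := by
        rw [hFA9]
        exact designVal A hAc A9 9 100 hA9b hA9d S1 hS1A 1600 (by omega)
          (by rw [hs1]; decide) (by rw [hs1]; decide)
      have na10 : ((FA 10).filter (fun c => S1 ⊆ c)).card = 7920 := by
        rw [hFA10]
        exact designVal A hAc A10 10 792 hA10b hA10d S1 hS1A 7920 (by omega)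
          (by rw [hs1]; decide) (by rw [hs1]; decide)
      have nb0 : ((FB 0).filter (fun d => S2 ⊆ d)).card = 3960 := by
        rw [hFB0]
        exact designVal Bs hBc B10 10 792 hB10b hB10d S2 hS2B 3960 (by omega)
          (by rw [hs2]; decide) (by rw [hs2]; decide)
      have nb1 : ((FB 1).filter (fun d => S2 ⊆ d)).card = 700 := by
        rw [hFB1]
        exact designVal Bs hBc B9 9 100 hB9b hB9d S2 hS2B 700 (by omega)
          (by rw [hs2]; decide) (by rw [hs2]; decide)
      have nb2 : ((FB 2).filter (fun d => S2 ⊆ d)).card = 1176 := by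
        rw [hFB2]
        exact designVal Bs hBc B8 8 112 hB8b hB8d S2 hS2B 1176 (by omega)
          (by rw [hs2]; decide) (by rw [hs2]; decide)
      have nb3 : ((FB 3).filter (fun d => S2 ⊆ d)).card = 1155 := by
        rw [hFB3]
        exact designVal Bs hBc B7 7 66 hB7b hB7d S2 hS2B 1155 (by omega)
          (by rw [hs2]; decide) (by rw [hs2]; decide)
      have nb4 : ((FB 4).filter (fun d => S2 ⊆ d)).card = 0 := by
        rw [hFB4]; rfl
      have nb5 : ((FB 5).filter (fun d => S2 ⊆ d)).card = 105 := by
        have h := powCount Bs S2 5 hS2B (by omega)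
        rw [hBc, hs2, show ((18:ℕ) - 3).choose (5 - 3) = 105 from by decide] at h
        rw [hFB5]; exact h
      have nb6 : ((FB 6).filter (fun d => S2 ⊆ d)).card = 15 := by
        have h := powCount Bs S2 4 hS2B (by omega)
        rw [hBc, hs2, show ((18:ℕ) - 3).choose (4 - 3) = 15 from by decide] at h
        rw [hFB6]; exact h
      have nb7 : ((FB 7).filter (fun d => S2 ⊆ d)).card = 1 := by
        have h := powCount Bs S2 3 hS2B (by omega)
        rw [hBc, hs2, show ((18:ℕ) - 3).choose (3 - 3) = 1 from by decide] at h
        rw [hFB7]; exact h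
      have nb8 : ((FB 8).filter (fun d => S2 ⊆ d)).card = 0 := by
        have h := powCount0 Bs S2 2 (by omega)
        rw [hFB8]; exact h
      have nb9 : ((FB 9).filter (fun d => S2 ⊆ d)).card = 0 := by
        have h := powCount0 Bs S2 1 (by omega)
        rw [hFB9]; exact h
      have nb10 : ((FB 10).filter (fun d => S2 ⊆ d)).card = 0 := by
        have h := powCount0 Bs S2 0 (by omega)
        rw [hFB10]; exact h
      rw [na0, na1, na2, na3, na4, na5, na6, na7, na8, na9, na10, nb0, nb1, nb2, nb3, nb5, nb6, nb7, nb8, nb9, nb10, nb4]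
    ·
      have hs2 : S2.card = 2 := by omega
      have na0 : ((FA 0).filter (fun c => S1 ⊆ c)).card = 0 := by
        have h := powCount0 A S1 0 (by omega)
        rw [hFA0]; exact h
      have na1 : ((FA 1).filter (fun c => S1 ⊆ c)).card = 0 := by
        have h := powCount0 A S1 1 (by omega)
        rw [hFA1]; exact h
      have na2 : ((FA 2).filter (fun c => S1 ⊆ c)).card = 0 := by
        have h := powCount0 A S1 2 (by omega)
        rw [hFA2]; exact h
      have na3 : ((FA 3).filter (fun c => S1 ⊆ c)).card = 1 := by
        have h := powCount A S1 3 hS1A (by omega)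
        rw [hAc, hs1, show ((18:ℕ) - 3).choose (3 - 3) = 1 from by decide] at h
        rw [hFA3]; exact h
      have na4 : ((FA 4).filter (fun c => S1 ⊆ c)).card = 15 := by
        have h := powCount A S1 4 hS1A (by omega)
        rw [hAc, hs1, show ((18:ℕ) - 3).choose (4 - 3) = 15 from by decide] at h
        rw [hFA4]; exact h
      have na5 : ((FA 5).filter (fun c => S1 ⊆ c)).card = 105 := by
        have h := powCount A S1 5 hS1A (by omega)
        rw [hAc, hs1, show ((18:ℕ) - 3).choose (5 - 3) = 105 from by decide] at h
        rw [hFA5]; exact h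
      have na6 : ((FA 6).filter (fun c => S1 ⊆ c)).card = 0 := by
        rw [hFA6]; rfl
      have na7 : ((FA 7).filter (fun c => S1 ⊆ c)).card = 1155 := by
        rw [hFA7]
        exact designVal A hAc A7 7 66 hA7b hA7d S1 hS1A 1155 (by omega)
          (by rw [hs1]; decide) (by rw [hs1]; decide)
      have na8 : ((FA 8).filter (fun c => S1 ⊆ c)).card = 1176 := by
        rw [hFA8]
        exact designVal A hAc A8 8 112 hA8b hA8d S1 hS1A 1176 (by omega)
          (by rw [hs1]; decide) (by rw [hs1]; decide)
      have na9 : ((FA 9).filter (fun c => S1 ⊆ c)).card = 700 := by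
        rw [hFA9]
        exact designVal A hAc A9 9 100 hA9b hA9d S1 hS1A 700 (by omega)
          (by rw [hs1]; decide) (by rw [hs1]; decide)
      have na10 : ((FA 10).filter (fun c => S1 ⊆ c)).card = 3960 := by
        rw [hFA10]
        exact designVal A hAc A10 10 792 hA10b hA10d S1 hS1A 3960 (by omega)
          (by rw [hs1]; decide) (by rw [hs1]; decide)
      have nb0 : ((FB 0).filter (fun d => S2 ⊆ d)).card = 7920 := by
        rw [hFB0]
        exact designVal Bs hBc B10 10 792 hB10b hB10d S2 hS2B 7920 (by omega)
          (by rw [hs2]; decide) (by rw [hs2]; decide)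
      have nb1 : ((FB 1).filter (fun d => S2 ⊆ d)).card = 1600 := by
        rw [hFB1]
        exact designVal Bs hBc B9 9 100 hB9b hB9d S2 hS2B 1600 (by omega)
          (by rw [hs2]; decide) (by rw [hs2]; decide)
      have nb2 : ((FB 2).filter (fun d => S2 ⊆ d)).card = 3136 := by
        rw [hFB2]
        exact designVal Bs hBc B8 8 112 hB8b hB8d S2 hS2B 3136 (by omega)
          (by rw [hs2]; decide) (by rw [hs2]; decide)
      have nb3 : ((FB 3).filter (fun d => S2 ⊆ d)).card = 3696 := by
        rw [hFB3]
        exact designVal Bs hBc B7 7 66 hB7b hB7d S2 hS2B 3696 (by omega)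
          (by rw [hs2]; decide) (by rw [hs2]; decide)
      have nb4 : ((FB 4).filter (fun d => S2 ⊆ d)).card = 0 := by
        rw [hFB4]; rfl
      have nb5 : ((FB 5).filter (fun d => S2 ⊆ d)).card = 560 := by
        have h := powCount Bs S2 5 hS2B (by omega)
        rw [hBc, hs2, show ((18:ℕ) - 2).choose (5 - 2) = 560 from by decide] at h
        rw [hFB5]; exact h
      have nb6 : ((FB 6).filter (fun d => S2 ⊆ d)).card = 120 := by
        have h := powCount Bs S2 4 hS2B (by omega)
        rw [hBc, hs2, show ((18:ℕ) - 2).choose (4 - 2) = 120 from by decide] at h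
        rw [hFB6]; exact h
      have nb7 : ((FB 7).filter (fun d => S2 ⊆ d)).card = 16 := by
        have h := powCount Bs S2 3 hS2B (by omega)
        rw [hBc, hs2, show ((18:ℕ) - 2).choose (3 - 2) = 16 from by decide] at h
        rw [hFB7]; exact h
      have nb8 : ((FB 8).filter (fun d => S2 ⊆ d)).card = 1 := by
        have h := powCount Bs S2 2 hS2B (by omega)
        rw [hBc, hs2, show ((18:ℕ) - 2).choose (2 - 2) = 1 from by decide] at h
        rw [hFB8]; exact h
      have nb9 : ((FB 9).filter (fun d => S2 ⊆ d)).card = 0 := by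
        have h := powCount0 Bs S2 1 (by omega)
        rw [hFB9]; exact h
      have nb10 : ((FB 10).filter (fun d => S2 ⊆ d)).card = 0 := by
        have h := powCount0 Bs S2 0 (by omega)
        rw [hFB10]; exact h
      rw [na0, na1, na2, na3, na4, na5, na6, na7, na8, na9, na10, nb0, nb1, nb2, nb3, nb5, nb6, nb7, nb8, nb9, nb10, nb4]
    ·
      have hs2 : S2.card = 1 := by omega
      have na0 : ((FA 0).filter (fun c => S1 ⊆ c)).card = 0 := by
        have h := powCount0 A S1 0 (by omega)
        rw [hFA0]; exact h
      have na1 : ((FA 1).filter (fun c => S1 ⊆ c)).card = 0 := by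
        have h := powCount0 A S1 1 (by omega)
        rw [hFA1]; exact h
      have na2 : ((FA 2).filter (fun c => S1 ⊆ c)).card = 0 := by
        have h := powCount0 A S1 2 (by omega)
        rw [hFA2]; exact h
      have na3 : ((FA 3).filter (fun c => S1 ⊆ c)).card = 0 := by
        have h := powCount0 A S1 3 (by omega)
        rw [hFA3]; exact h
      have na4 : ((FA 4).filter (fun c => S1 ⊆ c)).card = 1 := by
        have h := powCount A S1 4 hS1A (by omega)
        rw [hAc, hs1, show ((18:ℕ) - 4).choose (4 - 4) = 1 from by decide] at h
        rw [hFA4]; exact h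
      have na5 : ((FA 5).filter (fun c => S1 ⊆ c)).card = 14 := by
        have h := powCount A S1 5 hS1A (by omega)
        rw [hAc, hs1, show ((18:ℕ) - 4).choose (5 - 4) = 14 from by decide] at h
        rw [hFA5]; exact h
      have na6 : ((FA 6).filter (fun c => S1 ⊆ c)).card = 0 := by
        rw [hFA6]; rfl
      have na7 : ((FA 7).filter (fun c => S1 ⊆ c)).card = 308 := by
        rw [hFA7]
        exact designVal A hAc A7 7 66 hA7b hA7d S1 hS1A 308 (by omega)
          (by rw [hs1]; decide) (by rw [hs1]; decide)
      have na8 : ((FA 8).filter (fun c => S1 ⊆ c)).card = 392 := by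
        rw [hFA8]
        exact designVal A hAc A8 8 112 hA8b hA8d S1 hS1A 392 (by omega)
          (by rw [hs1]; decide) (by rw [hs1]; decide)
      have na9 : ((FA 9).filter (fun c => S1 ⊆ c)).card = 280 := by
        rw [hFA9]
        exact designVal A hAc A9 9 100 hA9b hA9d S1 hS1A 280 (by omega)
          (by rw [hs1]; decide) (by rw [hs1]; decide)
      have na10 : ((FA 10).filter (fun c => S1 ⊆ c)).card = 1848 := by
        rw [hFA10]
        exact designVal A hAc A10 10 792 hA10b hA10d S1 hS1A 1848 (by omega)
          (by rw [hs1]; decide) (by rw [hs1]; decide)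
      have nb0 : ((FB 0).filter (fun d => S2 ⊆ d)).card = 14960 := by
        rw [hFB0]
        exact designVal Bs hBc B10 10 792 hB10b hB10d S2 hS2B 14960 (by omega)
          (by rw [hs2]; decide) (by rw [hs2]; decide)
      have nb1 : ((FB 1).filter (fun d => S2 ⊆ d)).card = 3400 := by
        rw [hFB1]
        exact designVal Bs hBc B9 9 100 hB9b hB9d S2 hS2B 3400 (by omega)
          (by rw [hs2]; decide) (by rw [hs2]; decide)
      have nb2 : ((FB 2).filter (fun d => S2 ⊆ d)).card = 7616 := by
        rw [hFB2]
        exact designVal Bs hBc B8 8 112 hB8b hB8d S2 hS2B 7616 (by omega)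
          (by rw [hs2]; decide) (by rw [hs2]; decide)
      have nb3 : ((FB 3).filter (fun d => S2 ⊆ d)).card = 10472 := by
        rw [hFB3]
        exact designVal Bs hBc B7 7 66 hB7b hB7d S2 hS2B 10472 (by omega)
          (by rw [hs2]; decide) (by rw [hs2]; decide)
      have nb4 : ((FB 4).filter (fun d => S2 ⊆ d)).card = 0 := by
        rw [hFB4]; rfl
      have nb5 : ((FB 5).filter (fun d => S2 ⊆ d)).card = 2380 := by
        have h := powCount Bs S2 5 hS2B (by omega)
        rw [hBc, hs2, show ((18:ℕ) - 1).choose (5 - 1) = 2380 from by decide] at h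
        rw [hFB5]; exact h
      have nb6 : ((FB 6).filter (fun d => S2 ⊆ d)).card = 680 := by
        have h := powCount Bs S2 4 hS2B (by omega)
        rw [hBc, hs2, show ((18:ℕ) - 1).choose (4 - 1) = 680 from by decide] at h
        rw [hFB6]; exact h
      have nb7 : ((FB 7).filter (fun d => S2 ⊆ d)).card = 136 := by
        have h := powCount Bs S2 3 hS2B (by omega)
        rw [hBc, hs2, show ((18:ℕ) - 1).choose (3 - 1) = 136 from by decide] at h
        rw [hFB7]; exact h
      have nb8 : ((FB 8).filter (fun d => S2 ⊆ d)).card = 17 := by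
        have h := powCount Bs S2 2 hS2B (by omega)
        rw [hBc, hs2, show ((18:ℕ) - 1).choose (2 - 1) = 17 from by decide] at h
        rw [hFB8]; exact h
      have nb9 : ((FB 9).filter (fun d => S2 ⊆ d)).card = 1 := by
        have h := powCount Bs S2 1 hS2B (by omega)
        rw [hBc, hs2, show ((18:ℕ) - 1).choose (1 - 1) = 1 from by decide] at h
        rw [hFB9]; exact h
      have nb10 : ((FB 10).filter (fun d => S2 ⊆ d)).card = 0 := by
        have h := powCount0 Bs S2 0 (by omega)
        rw [hFB10]; exact h
      rw [na0, na1, na2, na3, na4, na5, na6, na7, na8, na9, na10, nb0, nb1, nb2, nb3, nb5, nb6, nb7, nb8, nb9, nb10, nb4]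
    ·
      have hs2 : S2.card = 0 := by omega
      have na0 : ((FA 0).filter (fun c => S1 ⊆ c)).card = 0 := by
        have h := powCount0 A S1 0 (by omega)
        rw [hFA0]; exact h
      have na1 : ((FA 1).filter (fun c => S1 ⊆ c)).card = 0 := by
        have h := powCount0 A S1 1 (by omega)
        rw [hFA1]; exact h
      have na2 : ((FA 2).filter (fun c => S1 ⊆ c)).card = 0 := by
        have h := powCount0 A S1 2 (by omega)
        rw [hFA2]; exact h
      have na3 : ((FA 3).filter (fun c => S1 ⊆ c)).card = 0 := by
        have h := powCount0 A S1 3 (by omega)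
        rw [hFA3]; exact h
      have na4 : ((FA 4).filter (fun c => S1 ⊆ c)).card = 0 := by
        have h := powCount0 A S1 4 (by omega)
        rw [hFA4]; exact h
      have na5 : ((FA 5).filter (fun c => S1 ⊆ c)).card = 1 := by
        have h := powCount A S1 5 hS1A (by omega)
        rw [hAc, hs1, show ((18:ℕ) - 5).choose (5 - 5) = 1 from by decide] at h
        rw [hFA5]; exact h
      have na6 : ((FA 6).filter (fun c => S1 ⊆ c)).card = 0 := by
        rw [hFA6]; rfl
      have na7 : ((FA 7).filter (fun c => S1 ⊆ c)).card = 66 := by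
        rw [hFA7]
        exact designVal A hAc A7 7 66 hA7b hA7d S1 hS1A 66 (by omega)
          (by rw [hs1]; decide) (by rw [hs1]; decide)
      have na8 : ((FA 8).filter (fun c => S1 ⊆ c)).card = 112 := by
        rw [hFA8]
        exact designVal A hAc A8 8 112 hA8b hA8d S1 hS1A 112 (by omega)
          (by rw [hs1]; decide) (by rw [hs1]; decide)
      have na9 : ((FA 9).filter (fun c => S1 ⊆ c)).card = 100 := by
        rw [hFA9]
        exact designVal A hAc A9 9 100 hA9b hA9d S1 hS1A 100 (by omega)
          (by rw [hs1]; decide) (by rw [hs1]; decide)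
      have na10 : ((FA 10).filter (fun c => S1 ⊆ c)).card = 792 := by
        rw [hFA10]
        exact designVal A hAc A10 10 792 hA10b hA10d S1 hS1A 792 (by omega)
          (by rw [hs1]; decide) (by rw [hs1]; decide)
      have nb0 : ((FB 0).filter (fun d => S2 ⊆ d)).card = 26928 := by
        rw [hFB0]
        exact designVal Bs hBc B10 10 792 hB10b hB10d S2 hS2B 26928 (by omega)
          (by rw [hs2]; decide) (by rw [hs2]; decide)
      have nb1 : ((FB 1).filter (fun d => S2 ⊆ d)).card = 6800 := by
        rw [hFB1]
        exact designVal Bs hBc B9 9 100 hB9b hB9d S2 hS2B 6800 (by omega)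
          (by rw [hs2]; decide) (by rw [hs2]; decide)
      have nb2 : ((FB 2).filter (fun d => S2 ⊆ d)).card = 17136 := by
        rw [hFB2]
        exact designVal Bs hBc B8 8 112 hB8b hB8d S2 hS2B 17136 (by omega)
          (by rw [hs2]; decide) (by rw [hs2]; decide)
      have nb3 : ((FB 3).filter (fun d => S2 ⊆ d)).card = 26928 := by
        rw [hFB3]
        exact designVal Bs hBc B7 7 66 hB7b hB7d S2 hS2B 26928 (by omega)
          (by rw [hs2]; decide) (by rw [hs2]; decide)
      have nb4 : ((FB 4).filter (fun d => S2 ⊆ d)).card = 0 := by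
        rw [hFB4]; rfl
      have nb5 : ((FB 5).filter (fun d => S2 ⊆ d)).card = 8568 := by
        have h := powCount Bs S2 5 hS2B (by omega)
        rw [hBc, hs2, show ((18:ℕ) - 0).choose (5 - 0) = 8568 from by decide] at h
        rw [hFB5]; exact h
      have nb6 : ((FB 6).filter (fun d => S2 ⊆ d)).card = 3060 := by
        have h := powCount Bs S2 4 hS2B (by omega)
        rw [hBc, hs2, show ((18:ℕ) - 0).choose (4 - 0) = 3060 from by decide] at h
        rw [hFB6]; exact h
      have nb7 : ((FB 7).filter (fun d => S2 ⊆ d)).card = 816 := by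
        have h := powCount Bs S2 3 hS2B (by omega)
        rw [hBc, hs2, show ((18:ℕ) - 0).choose (3 - 0) = 816 from by decide] at h
        rw [hFB7]; exact h
      have nb8 : ((FB 8).filter (fun d => S2 ⊆ d)).card = 153 := by
        have h := powCount Bs S2 2 hS2B (by omega)
        rw [hBc, hs2, show ((18:ℕ) - 0).choose (2 - 0) = 153 from by decide] at h
        rw [hFB8]; exact h
      have nb9 : ((FB 9).filter (fun d => S2 ⊆ d)).card = 18 := by
        have h := powCount Bs S2 1 hS2B (by omega)
        rw [hBc, hs2, show ((18:ℕ) - 0).choose (1 - 0) = 18 from by decide] at h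
        rw [hFB9]; exact h
      have nb10 : ((FB 10).filter (fun d => S2 ⊆ d)).card = 1 := by
        have h := powCount Bs S2 0 hS2B (by omega)
        rw [hBc, hs2, show ((18:ℕ) - 0).choose (0 - 0) = 1 from by decide] at h
        rw [hFB10]; exact h
      rw [na0, na1, na2, na3, na4, na5, na6, na7, na8, na9, na10, nb0, nb1, nb2, nb3, nb5, nb6, nb7, nb8, nb9, nb10, nb4]
end

section
/- Suppose there exist simple 5-(18,6,4), 5-(18,7,54), 5-(18,8,128), 5-(18,10,729) and 5-(18,11,264) designs. Then there exists a simple 5-(36, 13, 2148120) design (note 2148120 = 3672 × 585). -/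
open Finset

lemma card_supersets {b S : Finset ℕ} (hS : S ⊆ b) {n : ℕ} (hn : S.card ≤ n) :
    ((b.powersetCard n).filter (fun T => S ⊆ T)).card = (b.card - S.card).choose (n - S.card) := by
  rw [← Finset.card_sdiff_of_subset hS, ← Finset.card_powersetCard]
  apply Finset.card_nbij' (fun T => T \ S) (fun U => U ∪ S)
  · intro T hT
    simp only [Finset.mem_coe, mem_filter, Finset.mem_powersetCard] at hT
    obtain ⟨⟨hTb, hTc⟩, hST⟩ := hT
    rw [Finset.mem_coe, Finset.mem_powersetCard]
    exact ⟨Finset.sdiff_subset_sdiff hTb Finset.Subset.rfl,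
      by rw [Finset.card_sdiff_of_subset hST, hTc]⟩
  · intro U hU
    rw [Finset.mem_coe, Finset.mem_powersetCard] at hU
    obtain ⟨hUb, hUc⟩ := hU
    have hUS : Disjoint U S := (Finset.subset_sdiff.mp hUb).2.mono_left Finset.Subset.rfl
    simp only [Finset.mem_coe, mem_filter, Finset.mem_powersetCard]
    refine ⟨⟨Finset.union_subset ((Finset.subset_sdiff.mp hUb).1) hS, ?_⟩, Finset.subset_union_right⟩
    rw [Finset.card_union_of_disjoint hUS, hUc]
    omega
  · intro T hT
    simp only [Finset.mem_coe, mem_filter, Finset.mem_powersetCard] at hT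
    exact Finset.sdiff_union_of_subset hT.2
  · intro U hU
    rw [Finset.mem_coe, Finset.mem_powersetCard] at hU
    have hUS : Disjoint U S := (Finset.subset_sdiff.mp hU.1).2
    show (U ∪ S) \ S = U
    rw [Finset.union_sdiff_right, Finset.sdiff_eq_self_of_disjoint hUS]

lemma card_supersets_zero {b S : Finset ℕ} {n : ℕ} (hn : n < S.card) :
    ((b.powersetCard n).filter (fun T => S ⊆ T)).card = 0 := by
  rw [Finset.card_eq_zero, Finset.filter_eq_empty_iff]
  intro T hT hST
  rw [Finset.mem_powersetCard] at hT
  have := Finset.card_le_card hST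
  omega

lemma design_count {Y : Finset ℕ} {B : Finset (Finset ℕ)} {k lam : ℕ}
    (hB : ∀ b ∈ B, b ⊆ Y ∧ b.card = k)
    (hd : ∀ T ⊆ Y, T.card = 5 → (B.filter (fun b => T ⊆ b)).card = lam)
    {S : Finset ℕ} (hSY : S ⊆ Y) (hS5 : S.card ≤ 5) :
    (B.filter (fun b => S ⊆ b)).card * (k - S.card).choose (5 - S.card)
      = lam * (Y.card - S.card).choose (5 - S.card) := by
  classical
  set P := (Y.powersetCard 5).filter (fun T => S ⊆ T) with hPdef
  have hP : P.card = (Y.card - S.card).choose (5 - S.card) := card_supersets hSY hS5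
  have key : ∑ T ∈ P, (B.filter (fun b => T ⊆ b)).card
      = ∑ b ∈ B, (P.filter (fun T => T ⊆ b)).card := by
    simp only [Finset.card_filter]
    exact Finset.sum_comm
  have hleft : ∑ T ∈ P, (B.filter (fun b => T ⊆ b)).card = P.card * lam := by
    rw [Finset.sum_congr rfl (fun T hT => ?_), Finset.sum_const, smul_eq_mul]
    simp only [hPdef, mem_filter, Finset.mem_powersetCard] at hT
    exact hd T hT.1.1 hT.1.2
  have hright : ∀ b ∈ B, (P.filter (fun T => T ⊆ b)).card
      = if S ⊆ b then (k - S.card).choose (5 - S.card) else 0 := by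
    intro b hb
    obtain ⟨hbY, hbk⟩ := hB b hb
    by_cases hSb : S ⊆ b
    · rw [if_pos hSb]
      have heq : P.filter (fun T => T ⊆ b) = (b.powersetCard 5).filter (fun T => S ⊆ T) := by
        ext T
        simp only [hPdef, mem_filter, Finset.mem_powersetCard, Finset.filter_filter]
        have htr : T ⊆ b → T ⊆ Y := fun h => h.trans hbY
        tauto
      rw [heq, card_supersets hSb hS5, hbk]
    · rw [if_neg hSb, Finset.card_eq_zero, Finset.filter_eq_empty_iff]
      intro T hT hTb
      simp only [hPdef, mem_filter] at hT
      exact hSb (hT.2.trans hTb)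
  have main : P.card * lam = (B.filter (fun b => S ⊆ b)).card * (k - S.card).choose (5 - S.card) := by
    rw [← hleft, key, Finset.sum_congr rfl hright, ← Finset.sum_filter, Finset.sum_const,
      smul_eq_mul]
  rw [← main, hP, Nat.mul_comm]

lemma design_transport {t v k lam : ℕ} (h : SimpleDesignExists t v k lam)
    {Y : Finset ℕ} (hY : Y.card = v) :
    ∃ B : Finset (Finset ℕ), (∀ b ∈ B, b ⊆ Y ∧ b.card = k) ∧
      (∀ T ⊆ Y, T.card = t → (B.filter (fun b => T ⊆ b)).card = lam) := by
  classical
  obtain ⟨X, B, hX, hBk, hdes⟩ := h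
  have e : {x // x ∈ X} ≃ {x // x ∈ Y} := Finset.equivOfCardEq (hX.trans hY.symm)
  set g : ℕ → ℕ := fun n => if h : n ∈ X then (e ⟨n, h⟩ : ℕ) else 0 with hg
  set gi : ℕ → ℕ := fun n => if h : n ∈ Y then (e.symm ⟨n, h⟩ : ℕ) else 0 with hgi
  have hgY : ∀ x ∈ X, g x ∈ Y := by
    intro x hx; simp only [hg, dif_pos hx]; exact (e ⟨x, hx⟩).2
  have hgiX : ∀ y ∈ Y, gi y ∈ X := by
    intro y hy; simp only [hgi, dif_pos hy]; exact (e.symm ⟨y, hy⟩).2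
  have hgig : ∀ x ∈ X, gi (g x) = x := by
    intro x hx
    have h1 : g x = ↑(e ⟨x, hx⟩) := dif_pos hx
    have h2 : g x ∈ Y := by rw [h1]; exact (e ⟨x, hx⟩).2
    have h3 : gi (g x) = ↑(e.symm ⟨g x, h2⟩) := dif_pos h2
    have h4 : (⟨g x, h2⟩ : {y // y ∈ Y}) = e ⟨x, hx⟩ := Subtype.ext h1
    rw [h3, h4, Equiv.symm_apply_apply]
  have hggi : ∀ y ∈ Y, g (gi y) = y := by
    intro y hy
    have h1 : gi y = ↑(e.symm ⟨y, hy⟩) := dif_pos hy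
    have h2 : gi y ∈ X := by rw [h1]; exact (e.symm ⟨y, hy⟩).2
    have h3 : g (gi y) = ↑(e ⟨gi y, h2⟩) := dif_pos h2
    have h4 : (⟨gi y, h2⟩ : {x // x ∈ X}) = e.symm ⟨y, hy⟩ := Subtype.ext h1
    rw [h3, h4, Equiv.apply_symm_apply]
  have hginj : ∀ {s : Finset ℕ}, s ⊆ X → Set.InjOn g s := by
    intro s hs a ha b hb hab
    rw [← hgig a (hs ha), ← hgig b (hs hb), hab]
  have himg : ∀ {s : Finset ℕ}, s ⊆ X → (s.image g).image gi = s := by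
    intro s hs
    rw [Finset.image_image]
    refine Finset.image_congr (fun x hx => hgig x (hs hx)) |>.trans (Finset.image_id)
  refine ⟨B.image (fun b => b.image g), ?_, ?_⟩
  · intro b' hb'
    obtain ⟨b, hb, rfl⟩ := Finset.mem_image.mp hb'
    obtain ⟨hbX, hbk⟩ := hBk b hb
    constructor
    · intro y hy
      obtain ⟨x, hx, rfl⟩ := Finset.mem_image.mp hy
      exact hgY x (hbX hx)
    · rw [Finset.card_image_of_injOn (hginj hbX), hbk]
  · intro T hTY hTt
    set T' := T.image gi with hT'
    have hT'X : T' ⊆ X := by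
      intro z hz
      obtain ⟨y, hy, rfl⟩ := Finset.mem_image.mp hz
      exact hgiX y (hTY hy)
    have hT'c : T'.card = t := by
      rw [hT', Finset.card_image_of_injOn, hTt]
      intro a ha b hb hab
      rw [← hggi a (hTY ha), ← hggi b (hTY hb), hab]
    have hiff : ∀ b ∈ B, (T ⊆ b.image g ↔ T' ⊆ b) := by
      intro b hb
      have hbX := (hBk b hb).1
      constructor
      · intro hTb z hz
        obtain ⟨y, hy, rfl⟩ := Finset.mem_image.mp hz
        obtain ⟨x, hx, hxy⟩ := Finset.mem_image.mp (hTb hy)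
        rw [← hxy, hgig x (hbX hx)]
        exact hx
      · intro hT'b y hy
        rw [← hggi y (hTY hy)]
        exact Finset.mem_image_of_mem g (hT'b (Finset.mem_image_of_mem gi hy))
    rw [Finset.filter_image, Finset.card_image_of_injOn, Finset.filter_congr hiff]
    · exact hdes T' hT'X hT'c
    · intro b1 hb1 b2 hb2 hb12
      simp only [Finset.coe_filter, Set.mem_setOf_eq] at hb1 hb2
      have h1 := himg (hBk b1 hb1.1).1
      have h2 := himg (hBk b2 hb2.1).1
      rw [← h1, ← h2]
      exact congrArg _ hb12

lemma split_inter {Y1 Y2 a c : Finset ℕ} (hdisj : Disjoint Y1 Y2)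
    (ha : a ⊆ Y1) (hc : c ⊆ Y2) : (a ∪ c) ∩ Y1 = a ∧ (a ∪ c) ∩ Y2 = c := by
  constructor
  · rw [Finset.union_inter_distrib_right, Finset.inter_eq_left.mpr ha,
      Finset.disjoint_iff_inter_eq_empty.mp (Finset.disjoint_of_subset_left hc hdisj.symm), Finset.union_empty]
  · rw [Finset.union_inter_distrib_right, Finset.inter_eq_left.mpr hc,
      Finset.disjoint_iff_inter_eq_empty.mp (Finset.disjoint_of_subset_left ha hdisj), Finset.empty_union]

lemma split_blocks {Y1 Y2 : Finset ℕ} (hdisj : Disjoint Y1 Y2)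
    {A C : Finset (Finset ℕ)} {k1 k2 : ℕ}
    (hA : ∀ a ∈ A, a ⊆ Y1 ∧ a.card = k1) (hC : ∀ c ∈ C, c ⊆ Y2 ∧ c.card = k2) :
    ∀ b ∈ (A ×ˢ C).image (fun p => p.1 ∪ p.2),
      b ⊆ Y1 ∪ Y2 ∧ b.card = k1 + k2 ∧ (b ∩ Y1).card = k1 := by
  intro b hb
  obtain ⟨p, hp, rfl⟩ := Finset.mem_image.mp hb
  rw [Finset.mem_product] at hp
  obtain ⟨ha, hac⟩ := hA p.1 hp.1
  obtain ⟨hc, hcc⟩ := hC p.2 hp.2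
  obtain ⟨h1, h2⟩ := split_inter hdisj ha hc
  refine ⟨Finset.union_subset_union ha hc, ?_, by rw [h1, hac]⟩
  rw [Finset.card_union_of_disjoint (hdisj.mono ha hc), hac, hcc]

lemma split_count {Y1 Y2 : Finset ℕ} (hdisj : Disjoint Y1 Y2)
    {A C : Finset (Finset ℕ)} (hA : ∀ a ∈ A, a ⊆ Y1) (hC : ∀ c ∈ C, c ⊆ Y2)
    {T1 T2 : Finset ℕ} (hT1 : T1 ⊆ Y1) (hT2 : T2 ⊆ Y2) :
    (((A ×ˢ C).image (fun p => p.1 ∪ p.2)).filter (fun b => T1 ∪ T2 ⊆ b)).card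
      = (A.filter (fun a => T1 ⊆ a)).card * (C.filter (fun c => T2 ⊆ c)).card := by
  classical
  rw [Finset.filter_image, Finset.card_image_of_injOn, Finset.filter_congr
    (show ∀ p ∈ A ×ˢ C, (T1 ∪ T2 ⊆ p.1 ∪ p.2) ↔ (T1 ⊆ p.1 ∧ T2 ⊆ p.2) from ?_)]
  · rw [Finset.filter_product, Finset.card_product]
  · intro p hp
    rw [Finset.mem_product] at hp
    have ha := hA p.1 hp.1
    have hc := hC p.2 hp.2
    constructor
    · intro h
      constructor
      · intro x hx
        rcases Finset.mem_union.mp (h (Finset.mem_union_left _ hx)) with h' | h'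
        · exact h'
        · exact absurd (hT1 hx) (Finset.disjoint_right.mp hdisj (hc h'))
      · intro x hx
        rcases Finset.mem_union.mp (h (Finset.mem_union_right _ hx)) with h' | h'
        · exact absurd (hT2 hx) (Finset.disjoint_left.mp hdisj (ha h'))
        · exact h'
    · exact fun h => Finset.union_subset_union h.1 h.2
  · intro p hp q hq hpq
    simp only [Finset.coe_filter, Set.mem_setOf_eq, Finset.mem_product] at hp hq
    simp only at hpq
    obtain ⟨hp1, hp2⟩ := split_inter hdisj (hA p.1 hp.1.1) (hC p.2 hp.1.2)
    obtain ⟨hq1, hq2⟩ := split_inter hdisj (hA q.1 hq.1.1) (hC q.2 hq.1.2)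
    have e1 : p.1 = q.1 := by rw [← hp1, ← hq1, hpq]
    have e2 : p.2 = q.2 := by rw [← hp2, ← hq2, hpq]
    exact Prod.ext e1 e2

lemma blocks_disjoint {Y1 : Finset ℕ} {P Q : Finset (Finset ℕ)} {s s' : ℕ}
    (hP : ∀ b ∈ P, (b ∩ Y1).card = s) (hQ : ∀ b ∈ Q, (b ∩ Y1).card = s')
    (hss : s ≠ s') : Disjoint P Q := by
  rw [Finset.disjoint_left]
  intro b hb hb'
  exact hss ((hP b hb) ▸ (hQ b hb'))

theorem designExists_5_36_13
    (h1 : SimpleDesignExists 5 18 6 4)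
    (h2 : SimpleDesignExists 5 18 7 54)
    (h3 : SimpleDesignExists 5 18 8 128)
    (h4 : SimpleDesignExists 5 18 10 729)
    (h5 : SimpleDesignExists 5 18 11 264)
    : SimpleDesignExists 5 36 13 2148120 := by
  classical
  set Y1 : Finset ℕ := Finset.range 18 with hY1
  set Y2 : Finset ℕ := Finset.Ico 18 36 with hY2
  have hY1card : Y1.card = 18 := by simp [hY1]
  have hY2card : Y2.card = 18 := by simp [hY2]
  have hdisj : Disjoint Y1 Y2 := by
    rw [Finset.disjoint_left]
    intro x hx hx'
    rw [hY1, Finset.mem_range] at hx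
    rw [hY2, Finset.mem_Ico] at hx'
    omega
  have hunion : Y1 ∪ Y2 = Finset.range 36 := by
    ext x
    simp only [hY1, hY2, Finset.mem_union, Finset.mem_range, Finset.mem_Ico]
    omega
  obtain ⟨A6, hA6P, hA6D⟩ := design_transport h1 hY1card
  obtain ⟨C6, hC6P, hC6D⟩ := design_transport h1 hY2card
  obtain ⟨A7, hA7P, hA7D⟩ := design_transport h2 hY1card
  obtain ⟨C7, hC7P, hC7D⟩ := design_transport h2 hY2card
  obtain ⟨A8, hA8P, hA8D⟩ := design_transport h3 hY1card
  obtain ⟨C8, hC8P, hC8D⟩ := design_transport h3 hY2card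
  obtain ⟨A10, hA10P, hA10D⟩ := design_transport h4 hY1card
  obtain ⟨C10, hC10P, hC10D⟩ := design_transport h4 hY2card
  obtain ⟨A11, hA11P, hA11D⟩ := design_transport h5 hY1card
  obtain ⟨C11, hC11P, hC11D⟩ := design_transport h5 hY2card
  have hKP : ∀ (Y : Finset ℕ) (j : ℕ), ∀ a ∈ Y.powersetCard j, a ⊆ Y ∧ a.card = j :=
    fun Y j a ha => Finset.mem_powersetCard.mp ha
  set B2 := ((Y1.powersetCard 2) ×ˢ C11).image (fun p => p.1 ∪ p.2) with hB2def
  set B3 := ((Y1.powersetCard 3) ×ˢ C10).image (fun p => p.1 ∪ p.2) with hB3def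
  set B5 := ((Y1.powersetCard 5) ×ˢ C8).image (fun p => p.1 ∪ p.2) with hB5def
  set B6 := (A6 ×ˢ C7).image (fun p => p.1 ∪ p.2) with hB6def
  set B7 := (A7 ×ˢ C6).image (fun p => p.1 ∪ p.2) with hB7def
  set B8 := (A8 ×ˢ (Y2.powersetCard 5)).image (fun p => p.1 ∪ p.2) with hB8def
  set B10 := (A10 ×ˢ (Y2.powersetCard 3)).image (fun p => p.1 ∪ p.2) with hB10def
  set B11 := (A11 ×ˢ (Y2.powersetCard 2)).image (fun p => p.1 ∪ p.2) with hB11def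
  have hB2F : ∀ b ∈ B2, b ⊆ Y1 ∪ Y2 ∧ b.card = 13 ∧ (b ∩ Y1).card = 2 := by
    intro b hb
    obtain ⟨x, y, z⟩ := split_blocks hdisj (hKP Y1 2) hC11P b hb
    exact ⟨x, by omega, z⟩
  have hB3F : ∀ b ∈ B3, b ⊆ Y1 ∪ Y2 ∧ b.card = 13 ∧ (b ∩ Y1).card = 3 := by
    intro b hb
    obtain ⟨x, y, z⟩ := split_blocks hdisj (hKP Y1 3) hC10P b hb
    exact ⟨x, by omega, z⟩
  have hB5F : ∀ b ∈ B5, b ⊆ Y1 ∪ Y2 ∧ b.card = 13 ∧ (b ∩ Y1).card = 5 := by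
    intro b hb
    obtain ⟨x, y, z⟩ := split_blocks hdisj (hKP Y1 5) hC8P b hb
    exact ⟨x, by omega, z⟩
  have hB6F : ∀ b ∈ B6, b ⊆ Y1 ∪ Y2 ∧ b.card = 13 ∧ (b ∩ Y1).card = 6 := by
    intro b hb
    obtain ⟨x, y, z⟩ := split_blocks hdisj hA6P hC7P b hb
    exact ⟨x, by omega, z⟩
  have hB7F : ∀ b ∈ B7, b ⊆ Y1 ∪ Y2 ∧ b.card = 13 ∧ (b ∩ Y1).card = 7 := by
    intro b hb
    obtain ⟨x, y, z⟩ := split_blocks hdisj hA7P hC6P b hb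
    exact ⟨x, by omega, z⟩
  have hB8F : ∀ b ∈ B8, b ⊆ Y1 ∪ Y2 ∧ b.card = 13 ∧ (b ∩ Y1).card = 8 := by
    intro b hb
    obtain ⟨x, y, z⟩ := split_blocks hdisj hA8P (hKP Y2 5) b hb
    exact ⟨x, by omega, z⟩
  have hB10F : ∀ b ∈ B10, b ⊆ Y1 ∪ Y2 ∧ b.card = 13 ∧ (b ∩ Y1).card = 10 := by
    intro b hb
    obtain ⟨x, y, z⟩ := split_blocks hdisj hA10P (hKP Y2 3) b hb
    exact ⟨x, by omega, z⟩
  have hB11F : ∀ b ∈ B11, b ⊆ Y1 ∪ Y2 ∧ b.card = 13 ∧ (b ∩ Y1).card = 11 := by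
    intro b hb
    obtain ⟨x, y, z⟩ := split_blocks hdisj hA11P (hKP Y2 2) b hb
    exact ⟨x, by omega, z⟩
  refine ⟨Finset.range 36, (((((((B2 ∪ B3) ∪ B5) ∪ B6) ∪ B7) ∪ B8) ∪ B10) ∪ B11), by simp, ?_, ?_⟩
  · intro b hb
    simp only [Finset.mem_union] at hb
    rw [← hunion]
    rcases hb with ((((((hb|hb)|hb)|hb)|hb)|hb)|hb)|hb
    exacts [⟨(hB2F b hb).1, (hB2F b hb).2.1⟩, ⟨(hB3F b hb).1, (hB3F b hb).2.1⟩, ⟨(hB5F b hb).1, (hB5F b hb).2.1⟩, ⟨(hB6F b hb).1, (hB6F b hb).2.1⟩, ⟨(hB7F b hb).1, (hB7F b hb).2.1⟩, ⟨(hB8F b hb).1, (hB8F b hb).2.1⟩, ⟨(hB10F b hb).1, (hB10F b hb).2.1⟩, ⟨(hB11F b hb).1, (hB11F b hb).2.1⟩]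
  · have key : ∀ T1 T2 : Finset ℕ, T1 ⊆ Y1 → T2 ⊆ Y2 → T1.card + T2.card = 5 →
        (((((((((B2 ∪ B3) ∪ B5) ∪ B6) ∪ B7) ∪ B8) ∪ B10) ∪ B11)).filter (fun b => T1 ∪ T2 ⊆ b)).card = 2148120 := by
      intro T1 T2 hT1Y hT2Y hsum
      have hstep : ∀ {P Q : Finset (Finset ℕ)}, Disjoint P Q →
          ((P ∪ Q).filter (fun b => T1 ∪ T2 ⊆ b)).card
            = (P.filter (fun b => T1 ∪ T2 ⊆ b)).card + (Q.filter (fun b => T1 ∪ T2 ⊆ b)).card :=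
        fun hPQ => by rw [Finset.filter_union, Finset.card_union_of_disjoint (Finset.disjoint_filter_filter hPQ)]
      have d_2_3 : Disjoint B2 B3 := blocks_disjoint (fun b hb => (hB2F b hb).2.2) (fun b hb => (hB3F b hb).2.2) (by omega)
      have d_2_5 : Disjoint B2 B5 := blocks_disjoint (fun b hb => (hB2F b hb).2.2) (fun b hb => (hB5F b hb).2.2) (by omega)
      have d_2_6 : Disjoint B2 B6 := blocks_disjoint (fun b hb => (hB2F b hb).2.2) (fun b hb => (hB6F b hb).2.2) (by omega)
      have d_2_7 : Disjoint B2 B7 := blocks_disjoint (fun b hb => (hB2F b hb).2.2) (fun b hb => (hB7F b hb).2.2) (by omega)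
      have d_2_8 : Disjoint B2 B8 := blocks_disjoint (fun b hb => (hB2F b hb).2.2) (fun b hb => (hB8F b hb).2.2) (by omega)
      have d_2_10 : Disjoint B2 B10 := blocks_disjoint (fun b hb => (hB2F b hb).2.2) (fun b hb => (hB10F b hb).2.2) (by omega)
      have d_2_11 : Disjoint B2 B11 := blocks_disjoint (fun b hb => (hB2F b hb).2.2) (fun b hb => (hB11F b hb).2.2) (by omega)
      have d_3_5 : Disjoint B3 B5 := blocks_disjoint (fun b hb => (hB3F b hb).2.2) (fun b hb => (hB5F b hb).2.2) (by omega)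
      have d_3_6 : Disjoint B3 B6 := blocks_disjoint (fun b hb => (hB3F b hb).2.2) (fun b hb => (hB6F b hb).2.2) (by omega)
      have d_3_7 : Disjoint B3 B7 := blocks_disjoint (fun b hb => (hB3F b hb).2.2) (fun b hb => (hB7F b hb).2.2) (by omega)
      have d_3_8 : Disjoint B3 B8 := blocks_disjoint (fun b hb => (hB3F b hb).2.2) (fun b hb => (hB8F b hb).2.2) (by omega)
      have d_3_10 : Disjoint B3 B10 := blocks_disjoint (fun b hb => (hB3F b hb).2.2) (fun b hb => (hB10F b hb).2.2) (by omega)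
      have d_3_11 : Disjoint B3 B11 := blocks_disjoint (fun b hb => (hB3F b hb).2.2) (fun b hb => (hB11F b hb).2.2) (by omega)
      have d_5_6 : Disjoint B5 B6 := blocks_disjoint (fun b hb => (hB5F b hb).2.2) (fun b hb => (hB6F b hb).2.2) (by omega)
      have d_5_7 : Disjoint B5 B7 := blocks_disjoint (fun b hb => (hB5F b hb).2.2) (fun b hb => (hB7F b hb).2.2) (by omega)
      have d_5_8 : Disjoint B5 B8 := blocks_disjoint (fun b hb => (hB5F b hb).2.2) (fun b hb => (hB8F b hb).2.2) (by omega)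
      have d_5_10 : Disjoint B5 B10 := blocks_disjoint (fun b hb => (hB5F b hb).2.2) (fun b hb => (hB10F b hb).2.2) (by omega)
      have d_5_11 : Disjoint B5 B11 := blocks_disjoint (fun b hb => (hB5F b hb).2.2) (fun b hb => (hB11F b hb).2.2) (by omega)
      have d_6_7 : Disjoint B6 B7 := blocks_disjoint (fun b hb => (hB6F b hb).2.2) (fun b hb => (hB7F b hb).2.2) (by omega)
      have d_6_8 : Disjoint B6 B8 := blocks_disjoint (fun b hb => (hB6F b hb).2.2) (fun b hb => (hB8F b hb).2.2) (by omega)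
      have d_6_10 : Disjoint B6 B10 := blocks_disjoint (fun b hb => (hB6F b hb).2.2) (fun b hb => (hB10F b hb).2.2) (by omega)
      have d_6_11 : Disjoint B6 B11 := blocks_disjoint (fun b hb => (hB6F b hb).2.2) (fun b hb => (hB11F b hb).2.2) (by omega)
      have d_7_8 : Disjoint B7 B8 := blocks_disjoint (fun b hb => (hB7F b hb).2.2) (fun b hb => (hB8F b hb).2.2) (by omega)
      have d_7_10 : Disjoint B7 B10 := blocks_disjoint (fun b hb => (hB7F b hb).2.2) (fun b hb => (hB10F b hb).2.2) (by omega)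
      have d_7_11 : Disjoint B7 B11 := blocks_disjoint (fun b hb => (hB7F b hb).2.2) (fun b hb => (hB11F b hb).2.2) (by omega)
      have d_8_10 : Disjoint B8 B10 := blocks_disjoint (fun b hb => (hB8F b hb).2.2) (fun b hb => (hB10F b hb).2.2) (by omega)
      have d_8_11 : Disjoint B8 B11 := blocks_disjoint (fun b hb => (hB8F b hb).2.2) (fun b hb => (hB11F b hb).2.2) (by omega)
      have d_10_11 : Disjoint B10 B11 := blocks_disjoint (fun b hb => (hB10F b hb).2.2) (fun b hb => (hB11F b hb).2.2) (by omega)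
      have hd_7 : Disjoint ((((((B2 ∪ B3) ∪ B5) ∪ B6) ∪ B7) ∪ B8) ∪ B10) B11 := by
        simp only [Finset.disjoint_union_left]
        exact ⟨⟨⟨⟨⟨⟨d_2_11, d_3_11⟩, d_5_11⟩, d_6_11⟩, d_7_11⟩, d_8_11⟩, d_10_11⟩
      have hd_6 : Disjoint (((((B2 ∪ B3) ∪ B5) ∪ B6) ∪ B7) ∪ B8) B10 := by
        simp only [Finset.disjoint_union_left]
        exact ⟨⟨⟨⟨⟨d_2_10, d_3_10⟩, d_5_10⟩, d_6_10⟩, d_7_10⟩, d_8_10⟩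
      have hd_5 : Disjoint ((((B2 ∪ B3) ∪ B5) ∪ B6) ∪ B7) B8 := by
        simp only [Finset.disjoint_union_left]
        exact ⟨⟨⟨⟨d_2_8, d_3_8⟩, d_5_8⟩, d_6_8⟩, d_7_8⟩
      have hd_4 : Disjoint (((B2 ∪ B3) ∪ B5) ∪ B6) B7 := by
        simp only [Finset.disjoint_union_left]
        exact ⟨⟨⟨d_2_7, d_3_7⟩, d_5_7⟩, d_6_7⟩
      have hd_3 : Disjoint ((B2 ∪ B3) ∪ B5) B6 := by
        simp only [Finset.disjoint_union_left]
        exact ⟨⟨d_2_6, d_3_6⟩, d_5_6⟩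
      have hd_2 : Disjoint (B2 ∪ B3) B5 := by
        simp only [Finset.disjoint_union_left]
        exact ⟨d_2_5, d_3_5⟩
      have hd_1 : Disjoint B2 B3 := d_2_3
      rw [hstep hd_7, hstep hd_6, hstep hd_5, hstep hd_4, hstep hd_3, hstep hd_2, hstep hd_1]
      have p2 : (B2.filter (fun b => T1 ∪ T2 ⊆ b)).card
          = ((Y1.powersetCard 2).filter (fun a => T1 ⊆ a)).card * (C11.filter (fun c => T2 ⊆ c)).card := by
        rw [hB2def]
        exact split_count hdisj (fun a ha => ((hKP Y1 2) a ha).1) (fun c hc => (hC11P c hc).1) hT1Y hT2Y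
      have p3 : (B3.filter (fun b => T1 ∪ T2 ⊆ b)).card
          = ((Y1.powersetCard 3).filter (fun a => T1 ⊆ a)).card * (C10.filter (fun c => T2 ⊆ c)).card := by
        rw [hB3def]
        exact split_count hdisj (fun a ha => ((hKP Y1 3) a ha).1) (fun c hc => (hC10P c hc).1) hT1Y hT2Y
      have p5 : (B5.filter (fun b => T1 ∪ T2 ⊆ b)).card
          = ((Y1.powersetCard 5).filter (fun a => T1 ⊆ a)).card * (C8.filter (fun c => T2 ⊆ c)).card := by
        rw [hB5def]
        exact split_count hdisj (fun a ha => ((hKP Y1 5) a ha).1) (fun c hc => (hC8P c hc).1) hT1Y hT2Y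
      have p6 : (B6.filter (fun b => T1 ∪ T2 ⊆ b)).card
          = (A6.filter (fun a => T1 ⊆ a)).card * (C7.filter (fun c => T2 ⊆ c)).card := by
        rw [hB6def]
        exact split_count hdisj (fun a ha => (hA6P a ha).1) (fun c hc => (hC7P c hc).1) hT1Y hT2Y
      have p7 : (B7.filter (fun b => T1 ∪ T2 ⊆ b)).card
          = (A7.filter (fun a => T1 ⊆ a)).card * (C6.filter (fun c => T2 ⊆ c)).card := by
        rw [hB7def]
        exact split_count hdisj (fun a ha => (hA7P a ha).1) (fun c hc => (hC6P c hc).1) hT1Y hT2Y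
      have p8 : (B8.filter (fun b => T1 ∪ T2 ⊆ b)).card
          = (A8.filter (fun a => T1 ⊆ a)).card * ((Y2.powersetCard 5).filter (fun c => T2 ⊆ c)).card := by
        rw [hB8def]
        exact split_count hdisj (fun a ha => (hA8P a ha).1) (fun c hc => ((hKP Y2 5) c hc).1) hT1Y hT2Y
      have p10 : (B10.filter (fun b => T1 ∪ T2 ⊆ b)).card
          = (A10.filter (fun a => T1 ⊆ a)).card * ((Y2.powersetCard 3).filter (fun c => T2 ⊆ c)).card := by
        rw [hB10def]
        exact split_count hdisj (fun a ha => (hA10P a ha).1) (fun c hc => ((hKP Y2 3) c hc).1) hT1Y hT2Y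
      have p11 : (B11.filter (fun b => T1 ∪ T2 ⊆ b)).card
          = (A11.filter (fun a => T1 ⊆ a)).card * ((Y2.powersetCard 2).filter (fun c => T2 ⊆ c)).card := by
        rw [hB11def]
        exact split_count hdisj (fun a ha => (hA11P a ha).1) (fun c hc => ((hKP Y2 2) c hc).1) hT1Y hT2Y
      rw [p2, p3, p5, p6, p7, p8, p10, p11]
      have hcases : T1.card = 0 ∨ T1.card = 1 ∨ T1.card = 2 ∨ T1.card = 3 ∨ T1.card = 4 ∨ T1.card = 5 := by omega
      rcases hcases with h|h|h|h|h|h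
      · -- case T1.card = 0
        have h2 : T2.card = 5 := by omega
        have q1_2 : ((Y1.powersetCard 2).filter (fun a => T1 ⊆ a)).card = 153 := by
          rw [card_supersets hT1Y (by omega), hY1card, h]
          decide
        have q1_3 : ((Y1.powersetCard 3).filter (fun a => T1 ⊆ a)).card = 816 := by
          rw [card_supersets hT1Y (by omega), hY1card, h]
          decide
        have q1_5 : ((Y1.powersetCard 5).filter (fun a => T1 ⊆ a)).card = 8568 := by
          rw [card_supersets hT1Y (by omega), hY1card, h]
          decide
        have a_6 : (A6.filter (fun a => T1 ⊆ a)).card = 5712 := by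
          have hh := design_count hA6P hA6D hT1Y (by omega)
          rw [hY1card, h] at hh
          norm_num [Nat.choose] at hh
          omega
        have a_7 : (A7.filter (fun a => T1 ⊆ a)).card = 22032 := by
          have hh := design_count hA7P hA7D hT1Y (by omega)
          rw [hY1card, h] at hh
          norm_num [Nat.choose] at hh
          omega
        have a_8 : (A8.filter (fun a => T1 ⊆ a)).card = 19584 := by
          have hh := design_count hA8P hA8D hT1Y (by omega)
          rw [hY1card, h] at hh
          norm_num [Nat.choose] at hh
          omega
        have a_10 : (A10.filter (fun a => T1 ⊆ a)).card = 24786 := by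
          have hh := design_count hA10P hA10D hT1Y (by omega)
          rw [hY1card, h] at hh
          norm_num [Nat.choose] at hh
          omega
        have a_11 : (A11.filter (fun a => T1 ⊆ a)).card = 4896 := by
          have hh := design_count hA11P hA11D hT1Y (by omega)
          rw [hY1card, h] at hh
          norm_num [Nat.choose] at hh
          omega
        have q2_2 : ((Y2.powersetCard 2).filter (fun c => T2 ⊆ c)).card = 0 :=
          card_supersets_zero (by omega)
        have q2_3 : ((Y2.powersetCard 3).filter (fun c => T2 ⊆ c)).card = 0 :=
          card_supersets_zero (by omega)
        have q2_5 : ((Y2.powersetCard 5).filter (fun c => T2 ⊆ c)).card = 1 := by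
          rw [card_supersets hT2Y (by omega), hY2card, h2]
          decide
        have c_6 : (C6.filter (fun c => T2 ⊆ c)).card = 4 := by
          have hh := design_count hC6P hC6D hT2Y (by omega)
          rw [hY2card, h2] at hh
          norm_num [Nat.choose] at hh
          omega
        have c_7 : (C7.filter (fun c => T2 ⊆ c)).card = 54 := by
          have hh := design_count hC7P hC7D hT2Y (by omega)
          rw [hY2card, h2] at hh
          norm_num [Nat.choose] at hh
          omega
        have c_8 : (C8.filter (fun c => T2 ⊆ c)).card = 128 := by
          have hh := design_count hC8P hC8D hT2Y (by omega)
          rw [hY2card, h2] at hh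
          norm_num [Nat.choose] at hh
          omega
        have c_10 : (C10.filter (fun c => T2 ⊆ c)).card = 729 := by
          have hh := design_count hC10P hC10D hT2Y (by omega)
          rw [hY2card, h2] at hh
          norm_num [Nat.choose] at hh
          omega
        have c_11 : (C11.filter (fun c => T2 ⊆ c)).card = 264 := by
          have hh := design_count hC11P hC11D hT2Y (by omega)
          rw [hY2card, h2] at hh
          norm_num [Nat.choose] at hh
          omega
        rw [q1_2, c_11, q1_3, c_10, q1_5, c_8, a_6, c_7, a_7, c_6, a_8, q2_5, a_10, q2_3, a_11, q2_2]
      · -- case T1.card = 1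
        have h2 : T2.card = 4 := by omega
        have q1_2 : ((Y1.powersetCard 2).filter (fun a => T1 ⊆ a)).card = 17 := by
          rw [card_supersets hT1Y (by omega), hY1card, h]
          decide
        have q1_3 : ((Y1.powersetCard 3).filter (fun a => T1 ⊆ a)).card = 136 := by
          rw [card_supersets hT1Y (by omega), hY1card, h]
          decide
        have q1_5 : ((Y1.powersetCard 5).filter (fun a => T1 ⊆ a)).card = 2380 := by
          rw [card_supersets hT1Y (by omega), hY1card, h]
          decide
        have a_6 : (A6.filter (fun a => T1 ⊆ a)).card = 1904 := by
          have hh := design_count hA6P hA6D hT1Y (by omega)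
          rw [hY1card, h] at hh
          norm_num [Nat.choose] at hh
          omega
        have a_7 : (A7.filter (fun a => T1 ⊆ a)).card = 8568 := by
          have hh := design_count hA7P hA7D hT1Y (by omega)
          rw [hY1card, h] at hh
          norm_num [Nat.choose] at hh
          omega
        have a_8 : (A8.filter (fun a => T1 ⊆ a)).card = 8704 := by
          have hh := design_count hA8P hA8D hT1Y (by omega)
          rw [hY1card, h] at hh
          norm_num [Nat.choose] at hh
          omega
        have a_10 : (A10.filter (fun a => T1 ⊆ a)).card = 13770 := by
          have hh := design_count hA10P hA10D hT1Y (by omega)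
          rw [hY1card, h] at hh
          norm_num [Nat.choose] at hh
          omega
        have a_11 : (A11.filter (fun a => T1 ⊆ a)).card = 2992 := by
          have hh := design_count hA11P hA11D hT1Y (by omega)
          rw [hY1card, h] at hh
          norm_num [Nat.choose] at hh
          omega
        have q2_2 : ((Y2.powersetCard 2).filter (fun c => T2 ⊆ c)).card = 0 :=
          card_supersets_zero (by omega)
        have q2_3 : ((Y2.powersetCard 3).filter (fun c => T2 ⊆ c)).card = 0 :=
          card_supersets_zero (by omega)
        have q2_5 : ((Y2.powersetCard 5).filter (fun c => T2 ⊆ c)).card = 14 := by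
          rw [card_supersets hT2Y (by omega), hY2card, h2]
          decide
        have c_6 : (C6.filter (fun c => T2 ⊆ c)).card = 28 := by
          have hh := design_count hC6P hC6D hT2Y (by omega)
          rw [hY2card, h2] at hh
          norm_num [Nat.choose] at hh
          omega
        have c_7 : (C7.filter (fun c => T2 ⊆ c)).card = 252 := by
          have hh := design_count hC7P hC7D hT2Y (by omega)
          rw [hY2card, h2] at hh
          norm_num [Nat.choose] at hh
          omega
        have c_8 : (C8.filter (fun c => T2 ⊆ c)).card = 448 := by
          have hh := design_count hC8P hC8D hT2Y (by omega)
          rw [hY2card, h2] at hh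
          norm_num [Nat.choose] at hh
          omega
        have c_10 : (C10.filter (fun c => T2 ⊆ c)).card = 1701 := by
          have hh := design_count hC10P hC10D hT2Y (by omega)
          rw [hY2card, h2] at hh
          norm_num [Nat.choose] at hh
          omega
        have c_11 : (C11.filter (fun c => T2 ⊆ c)).card = 528 := by
          have hh := design_count hC11P hC11D hT2Y (by omega)
          rw [hY2card, h2] at hh
          norm_num [Nat.choose] at hh
          omega
        rw [q1_2, c_11, q1_3, c_10, q1_5, c_8, a_6, c_7, a_7, c_6, a_8, q2_5, a_10, q2_3, a_11, q2_2]
      · -- case T1.card = 2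
        have h2 : T2.card = 3 := by omega
        have q1_2 : ((Y1.powersetCard 2).filter (fun a => T1 ⊆ a)).card = 1 := by
          rw [card_supersets hT1Y (by omega), hY1card, h]
          decide
        have q1_3 : ((Y1.powersetCard 3).filter (fun a => T1 ⊆ a)).card = 16 := by
          rw [card_supersets hT1Y (by omega), hY1card, h]
          decide
        have q1_5 : ((Y1.powersetCard 5).filter (fun a => T1 ⊆ a)).card = 560 := by
          rw [card_supersets hT1Y (by omega), hY1card, h]
          decide
        have a_6 : (A6.filter (fun a => T1 ⊆ a)).card = 560 := by
          have hh := design_count hA6P hA6D hT1Y (by omega)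
          rw [hY1card, h] at hh
          norm_num [Nat.choose] at hh
          omega
        have a_7 : (A7.filter (fun a => T1 ⊆ a)).card = 3024 := by
          have hh := design_count hA7P hA7D hT1Y (by omega)
          rw [hY1card, h] at hh
          norm_num [Nat.choose] at hh
          omega
        have a_8 : (A8.filter (fun a => T1 ⊆ a)).card = 3584 := by
          have hh := design_count hA8P hA8D hT1Y (by omega)
          rw [hY1card, h] at hh
          norm_num [Nat.choose] at hh
          omega
        have a_10 : (A10.filter (fun a => T1 ⊆ a)).card = 7290 := by
          have hh := design_count hA10P hA10D hT1Y (by omega)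
          rw [hY1card, h] at hh
          norm_num [Nat.choose] at hh
          omega
        have a_11 : (A11.filter (fun a => T1 ⊆ a)).card = 1760 := by
          have hh := design_count hA11P hA11D hT1Y (by omega)
          rw [hY1card, h] at hh
          norm_num [Nat.choose] at hh
          omega
        have q2_2 : ((Y2.powersetCard 2).filter (fun c => T2 ⊆ c)).card = 0 :=
          card_supersets_zero (by omega)
        have q2_3 : ((Y2.powersetCard 3).filter (fun c => T2 ⊆ c)).card = 1 := by
          rw [card_supersets hT2Y (by omega), hY2card, h2]
          decide
        have q2_5 : ((Y2.powersetCard 5).filter (fun c => T2 ⊆ c)).card = 105 := by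
          rw [card_supersets hT2Y (by omega), hY2card, h2]
          decide
        have c_6 : (C6.filter (fun c => T2 ⊆ c)).card = 140 := by
          have hh := design_count hC6P hC6D hT2Y (by omega)
          rw [hY2card, h2] at hh
          norm_num [Nat.choose] at hh
          omega
        have c_7 : (C7.filter (fun c => T2 ⊆ c)).card = 945 := by
          have hh := design_count hC7P hC7D hT2Y (by omega)
          rw [hY2card, h2] at hh
          norm_num [Nat.choose] at hh
          omega
        have c_8 : (C8.filter (fun c => T2 ⊆ c)).card = 1344 := by
          have hh := design_count hC8P hC8D hT2Y (by omega)
          rw [hY2card, h2] at hh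
          norm_num [Nat.choose] at hh
          omega
        have c_10 : (C10.filter (fun c => T2 ⊆ c)).card = 3645 := by
          have hh := design_count hC10P hC10D hT2Y (by omega)
          rw [hY2card, h2] at hh
          norm_num [Nat.choose] at hh
          omega
        have c_11 : (C11.filter (fun c => T2 ⊆ c)).card = 990 := by
          have hh := design_count hC11P hC11D hT2Y (by omega)
          rw [hY2card, h2] at hh
          norm_num [Nat.choose] at hh
          omega
        rw [q1_2, c_11, q1_3, c_10, q1_5, c_8, a_6, c_7, a_7, c_6, a_8, q2_5, a_10, q2_3, a_11, q2_2]
      · -- case T1.card = 3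
        have h2 : T2.card = 2 := by omega
        have q1_2 : ((Y1.powersetCard 2).filter (fun a => T1 ⊆ a)).card = 0 :=
          card_supersets_zero (by omega)
        have q1_3 : ((Y1.powersetCard 3).filter (fun a => T1 ⊆ a)).card = 1 := by
          rw [card_supersets hT1Y (by omega), hY1card, h]
          decide
        have q1_5 : ((Y1.powersetCard 5).filter (fun a => T1 ⊆ a)).card = 105 := by
          rw [card_supersets hT1Y (by omega), hY1card, h]
          decide
        have a_6 : (A6.filter (fun a => T1 ⊆ a)).card = 140 := by
          have hh := design_count hA6P hA6D hT1Y (by omega)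
          rw [hY1card, h] at hh
          norm_num [Nat.choose] at hh
          omega
        have a_7 : (A7.filter (fun a => T1 ⊆ a)).card = 945 := by
          have hh := design_count hA7P hA7D hT1Y (by omega)
          rw [hY1card, h] at hh
          norm_num [Nat.choose] at hh
          omega
        have a_8 : (A8.filter (fun a => T1 ⊆ a)).card = 1344 := by
          have hh := design_count hA8P hA8D hT1Y (by omega)
          rw [hY1card, h] at hh
          norm_num [Nat.choose] at hh
          omega
        have a_10 : (A10.filter (fun a => T1 ⊆ a)).card = 3645 := by
          have hh := design_count hA10P hA10D hT1Y (by omega)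
          rw [hY1card, h] at hh
          norm_num [Nat.choose] at hh
          omega
        have a_11 : (A11.filter (fun a => T1 ⊆ a)).card = 990 := by
          have hh := design_count hA11P hA11D hT1Y (by omega)
          rw [hY1card, h] at hh
          norm_num [Nat.choose] at hh
          omega
        have q2_2 : ((Y2.powersetCard 2).filter (fun c => T2 ⊆ c)).card = 1 := by
          rw [card_supersets hT2Y (by omega), hY2card, h2]
          decide
        have q2_3 : ((Y2.powersetCard 3).filter (fun c => T2 ⊆ c)).card = 16 := by
          rw [card_supersets hT2Y (by omega), hY2card, h2]
          decide
        have q2_5 : ((Y2.powersetCard 5).filter (fun c => T2 ⊆ c)).card = 560 := by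
          rw [card_supersets hT2Y (by omega), hY2card, h2]
          decide
        have c_6 : (C6.filter (fun c => T2 ⊆ c)).card = 560 := by
          have hh := design_count hC6P hC6D hT2Y (by omega)
          rw [hY2card, h2] at hh
          norm_num [Nat.choose] at hh
          omega
        have c_7 : (C7.filter (fun c => T2 ⊆ c)).card = 3024 := by
          have hh := design_count hC7P hC7D hT2Y (by omega)
          rw [hY2card, h2] at hh
          norm_num [Nat.choose] at hh
          omega
        have c_8 : (C8.filter (fun c => T2 ⊆ c)).card = 3584 := by
          have hh := design_count hC8P hC8D hT2Y (by omega)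
          rw [hY2card, h2] at hh
          norm_num [Nat.choose] at hh
          omega
        have c_10 : (C10.filter (fun c => T2 ⊆ c)).card = 7290 := by
          have hh := design_count hC10P hC10D hT2Y (by omega)
          rw [hY2card, h2] at hh
          norm_num [Nat.choose] at hh
          omega
        have c_11 : (C11.filter (fun c => T2 ⊆ c)).card = 1760 := by
          have hh := design_count hC11P hC11D hT2Y (by omega)
          rw [hY2card, h2] at hh
          norm_num [Nat.choose] at hh
          omega
        rw [q1_2, c_11, q1_3, c_10, q1_5, c_8, a_6, c_7, a_7, c_6, a_8, q2_5, a_10, q2_3, a_11, q2_2]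
      · -- case T1.card = 4
        have h2 : T2.card = 1 := by omega
        have q1_2 : ((Y1.powersetCard 2).filter (fun a => T1 ⊆ a)).card = 0 :=
          card_supersets_zero (by omega)
        have q1_3 : ((Y1.powersetCard 3).filter (fun a => T1 ⊆ a)).card = 0 :=
          card_supersets_zero (by omega)
        have q1_5 : ((Y1.powersetCard 5).filter (fun a => T1 ⊆ a)).card = 14 := by
          rw [card_supersets hT1Y (by omega), hY1card, h]
          decide
        have a_6 : (A6.filter (fun a => T1 ⊆ a)).card = 28 := by
          have hh := design_count hA6P hA6D hT1Y (by omega)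
          rw [hY1card, h] at hh
          norm_num [Nat.choose] at hh
          omega
        have a_7 : (A7.filter (fun a => T1 ⊆ a)).card = 252 := by
          have hh := design_count hA7P hA7D hT1Y (by omega)
          rw [hY1card, h] at hh
          norm_num [Nat.choose] at hh
          omega
        have a_8 : (A8.filter (fun a => T1 ⊆ a)).card = 448 := by
          have hh := design_count hA8P hA8D hT1Y (by omega)
          rw [hY1card, h] at hh
          norm_num [Nat.choose] at hh
          omega
        have a_10 : (A10.filter (fun a => T1 ⊆ a)).card = 1701 := by
          have hh := design_count hA10P hA10D hT1Y (by omega)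
          rw [hY1card, h] at hh
          norm_num [Nat.choose] at hh
          omega
        have a_11 : (A11.filter (fun a => T1 ⊆ a)).card = 528 := by
          have hh := design_count hA11P hA11D hT1Y (by omega)
          rw [hY1card, h] at hh
          norm_num [Nat.choose] at hh
          omega
        have q2_2 : ((Y2.powersetCard 2).filter (fun c => T2 ⊆ c)).card = 17 := by
          rw [card_supersets hT2Y (by omega), hY2card, h2]
          decide
        have q2_3 : ((Y2.powersetCard 3).filter (fun c => T2 ⊆ c)).card = 136 := by
          rw [card_supersets hT2Y (by omega), hY2card, h2]
          decide
        have q2_5 : ((Y2.powersetCard 5).filter (fun c => T2 ⊆ c)).card = 2380 := by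
          rw [card_supersets hT2Y (by omega), hY2card, h2]
          decide
        have c_6 : (C6.filter (fun c => T2 ⊆ c)).card = 1904 := by
          have hh := design_count hC6P hC6D hT2Y (by omega)
          rw [hY2card, h2] at hh
          norm_num [Nat.choose] at hh
          omega
        have c_7 : (C7.filter (fun c => T2 ⊆ c)).card = 8568 := by
          have hh := design_count hC7P hC7D hT2Y (by omega)
          rw [hY2card, h2] at hh
          norm_num [Nat.choose] at hh
          omega
        have c_8 : (C8.filter (fun c => T2 ⊆ c)).card = 8704 := by
          have hh := design_count hC8P hC8D hT2Y (by omega)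
          rw [hY2card, h2] at hh
          norm_num [Nat.choose] at hh
          omega
        have c_10 : (C10.filter (fun c => T2 ⊆ c)).card = 13770 := by
          have hh := design_count hC10P hC10D hT2Y (by omega)
          rw [hY2card, h2] at hh
          norm_num [Nat.choose] at hh
          omega
        have c_11 : (C11.filter (fun c => T2 ⊆ c)).card = 2992 := by
          have hh := design_count hC11P hC11D hT2Y (by omega)
          rw [hY2card, h2] at hh
          norm_num [Nat.choose] at hh
          omega
        rw [q1_2, c_11, q1_3, c_10, q1_5, c_8, a_6, c_7, a_7, c_6, a_8, q2_5, a_10, q2_3, a_11, q2_2]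
      · -- case T1.card = 5
        have h2 : T2.card = 0 := by omega
        have q1_2 : ((Y1.powersetCard 2).filter (fun a => T1 ⊆ a)).card = 0 :=
          card_supersets_zero (by omega)
        have q1_3 : ((Y1.powersetCard 3).filter (fun a => T1 ⊆ a)).card = 0 :=
          card_supersets_zero (by omega)
        have q1_5 : ((Y1.powersetCard 5).filter (fun a => T1 ⊆ a)).card = 1 := by
          rw [card_supersets hT1Y (by omega), hY1card, h]
          decide
        have a_6 : (A6.filter (fun a => T1 ⊆ a)).card = 4 := by
          have hh := design_count hA6P hA6D hT1Y (by omega)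
          rw [hY1card, h] at hh
          norm_num [Nat.choose] at hh
          omega
        have a_7 : (A7.filter (fun a => T1 ⊆ a)).card = 54 := by
          have hh := design_count hA7P hA7D hT1Y (by omega)
          rw [hY1card, h] at hh
          norm_num [Nat.choose] at hh
          omega
        have a_8 : (A8.filter (fun a => T1 ⊆ a)).card = 128 := by
          have hh := design_count hA8P hA8D hT1Y (by omega)
          rw [hY1card, h] at hh
          norm_num [Nat.choose] at hh
          omega
        have a_10 : (A10.filter (fun a => T1 ⊆ a)).card = 729 := by
          have hh := design_count hA10P hA10D hT1Y (by omega)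
          rw [hY1card, h] at hh
          norm_num [Nat.choose] at hh
          omega
        have a_11 : (A11.filter (fun a => T1 ⊆ a)).card = 264 := by
          have hh := design_count hA11P hA11D hT1Y (by omega)
          rw [hY1card, h] at hh
          norm_num [Nat.choose] at hh
          omega
        have q2_2 : ((Y2.powersetCard 2).filter (fun c => T2 ⊆ c)).card = 153 := by
          rw [card_supersets hT2Y (by omega), hY2card, h2]
          decide
        have q2_3 : ((Y2.powersetCard 3).filter (fun c => T2 ⊆ c)).card = 816 := by
          rw [card_supersets hT2Y (by omega), hY2card, h2]
          decide
        have q2_5 : ((Y2.powersetCard 5).filter (fun c => T2 ⊆ c)).card = 8568 := by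
          rw [card_supersets hT2Y (by omega), hY2card, h2]
          decide
        have c_6 : (C6.filter (fun c => T2 ⊆ c)).card = 5712 := by
          have hh := design_count hC6P hC6D hT2Y (by omega)
          rw [hY2card, h2] at hh
          norm_num [Nat.choose] at hh
          omega
        have c_7 : (C7.filter (fun c => T2 ⊆ c)).card = 22032 := by
          have hh := design_count hC7P hC7D hT2Y (by omega)
          rw [hY2card, h2] at hh
          norm_num [Nat.choose] at hh
          omega
        have c_8 : (C8.filter (fun c => T2 ⊆ c)).card = 19584 := by
          have hh := design_count hC8P hC8D hT2Y (by omega)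
          rw [hY2card, h2] at hh
          norm_num [Nat.choose] at hh
          omega
        have c_10 : (C10.filter (fun c => T2 ⊆ c)).card = 24786 := by
          have hh := design_count hC10P hC10D hT2Y (by omega)
          rw [hY2card, h2] at hh
          norm_num [Nat.choose] at hh
          omega
        have c_11 : (C11.filter (fun c => T2 ⊆ c)).card = 4896 := by
          have hh := design_count hC11P hC11D hT2Y (by omega)
          rw [hY2card, h2] at hh
          norm_num [Nat.choose] at hh
          omega
        rw [q1_2, c_11, q1_3, c_10, q1_5, c_8, a_6, c_7, a_7, c_6, a_8, q2_5, a_10, q2_3, a_11, q2_2]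
    intro T hTX hT5
    have hTeq : T = (T ∩ Y1) ∪ (T ∩ Y2) := by
      rw [← Finset.inter_union_distrib_left, hunion, Finset.inter_eq_left.mpr hTX]
    have hdT : Disjoint (T ∩ Y1) (T ∩ Y2) :=
      hdisj.mono Finset.inter_subset_right Finset.inter_subset_right
    have hsum : (T ∩ Y1).card + (T ∩ Y2).card = 5 := by
      rw [← Finset.card_union_of_disjoint hdT, ← hTeq, hT5]
    rw [hTeq]
    exact key (T ∩ Y1) (T ∩ Y2) Finset.inter_subset_right Finset.inter_subset_right hsum
end
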